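/- arXiv:1312.2196 — 9 statements merged into one kernel-verified Lean document; each statement's English description precedes it below -/
import Mathlib

section
/- For every z ∈ ℂ and every j ≥ 0 the following identities hold: P_j(z)Q⁺_j(z) − Q_j(z)P⁺_j(z) = O; P_{j+1}(z)Q⁺_j(z) − Q_{j+1}(z)P⁺_j(z) = A_{j,j+1}⁻¹; and Q_j(z)P⁺_{j+1}(z) − P_j(z)Q⁺_{j+1}(z) = A_{j+1,j}⁻¹. -/
open Matrix Filter
open scoped BigOperators ENNReal

/-- Square `n × n` complex matrices. -/
abbrev Mat (n : ℕ) := Matrix (Fin n) (Fin n) ℂ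

/-- `Alo b j` is the coefficient `A_{j,j-1}` (so `Alo b 0 = A_{0,-1} = -E` and
`Alo b (j+1) = A_{j+1,j} = b j`). -/
def Alo {n : ℕ} (b : ℕ → Mat n) : ℕ → Mat n
  | 0 => -1
  | j + 1 => b j

/-- `Aup a j` is the coefficient `A_{j-1,j}` (so `Aup a 0 = A_{-1,0} = -E` and
`Aup a (j+1) = A_{j,j+1} = a j`). -/
def Aup {n : ℕ} (a : ℕ → Mat n) : ℕ → Mat n
  | 0 => -1
  | j + 1 => a j

/-- Matrix equation (1).  Sequences are indexed by `ℕ`, where index `k` represents the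
paper index `k - 1` (so index `0` is the paper index `-1`).  Here `d j = A_{j,j}`,
`a j = A_{j,j+1}`, `b j = A_{j+1,j}`. -/
def SolEq1 {n : ℕ} (d a b : ℕ → Mat n) (z : ℂ) (Y : ℕ → Mat n) : Prop :=
  ∀ j : ℕ, Alo b j * Y j + d j * Y (j + 1) + a j * Y (j + 2) = z • Y (j + 1)

/-- Matrix equation (2), with the same index shift. -/
def SolEq2 {n : ℕ} (d a b : ℕ → Mat n) (z : ℂ) (Y : ℕ → Mat n) : Prop :=
  ∀ j : ℕ, Y j * Aup a j + Y (j + 1) * d j + Y (j + 2) * b j = z • Y (j + 1)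

/-- Vector equation (1v), with the same index shift. -/
def SolEq1v {n : ℕ} (d a b : ℕ → Mat n) (z : ℂ) (u : ℕ → Fin n → ℂ) : Prop :=
  ∀ j : ℕ, Alo b j *ᵥ u j + d j *ᵥ u (j + 1) + a j *ᵥ u (j + 2) = z • u (j + 1)

/-- Vector equation (2v) for the row vectors `v_j^*`, with the same index shift. -/
def SolEq2v {n : ℕ} (d a b : ℕ → Mat n) (z : ℂ) (v : ℕ → Fin n → ℂ) : Prop :=
  ∀ j : ℕ, star (v j) ᵥ* Aup a j + star (v (j + 1)) ᵥ* d j + star (v (j + 2)) ᵥ* b j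
    = z • star (v (j + 1))

/-- the identities (ind1). -/
theorem statement0 {n : ℕ} (hn : 1 ≤ n) (d a b : ℕ → Mat n)
    (ha : ∀ j, IsUnit (a j)) (hb : ∀ j, IsUnit (b j)) (z : ℂ)
    (P Q Pp Qp : ℕ → Mat n)
    (hP : SolEq1 d a b z P) (hQ : SolEq1 d a b z Q)
    (hPp : SolEq2 d a b z Pp) (hQp : SolEq2 d a b z Qp)
    (hP0 : P 0 = 1) (hP1 : P 1 = 0) (hQ0 : Q 0 = 0) (hQ1 : Q 1 = 1)
    (hPp0 : Pp 0 = 1) (hPp1 : Pp 1 = 0) (hQp0 : Qp 0 = 0) (hQp1 : Qp 1 = 1)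
    (j : ℕ) :
    P (j + 1) * Qp (j + 1) - Q (j + 1) * Pp (j + 1) = 0 ∧
    P (j + 2) * Qp (j + 1) - Q (j + 2) * Pp (j + 1) = (a j)⁻¹ ∧
    Q (j + 1) * Pp (j + 2) - P (j + 1) * Qp (j + 2) = (b j)⁻¹ := by
  -- invertibility facts
  have hAlo : ∀ k, IsUnit (Alo b k) := by
    intro k; cases k with
    | zero => simpa [Alo] using isUnit_one.neg
    | succ k => simpa [Alo] using hb k
  have hAup : ∀ k, IsUnit (Aup a k) := by
    intro k; cases k with
    | zero => simpa [Aup] using isUnit_one.neg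
    | succ k => simpa [Aup] using ha k
  have hmulinv : ∀ M : Mat n, IsUnit M → M * M⁻¹ = 1 := fun M hM =>
    Matrix.mul_nonsing_inv M ((Matrix.isUnit_iff_isUnit_det M).mp hM)
  have hinvmul : ∀ M : Mat n, IsUnit M → M⁻¹ * M = 1 := fun M hM =>
    Matrix.nonsing_inv_mul M ((Matrix.isUnit_iff_isUnit_det M).mp hM)
  -- solve the recurrences for the top term
  have rec1 : ∀ (Y : ℕ → Mat n), SolEq1 d a b z Y → ∀ k,
      Y (k + 2) = (a k)⁻¹ * (z • Y (k + 1) - d k * Y (k + 1) - Alo b k * Y k) := by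
    intro Y hY k
    have h2 : a k * Y (k + 2) = z • Y (k + 1) - d k * Y (k + 1) - Alo b k * Y k := by
      rw [← hY k]; abel
    calc Y (k + 2) = (a k)⁻¹ * (a k * Y (k + 2)) := by
          rw [← mul_assoc, hinvmul _ (ha k), one_mul]
      _ = (a k)⁻¹ * (z • Y (k + 1) - d k * Y (k + 1) - Alo b k * Y k) := by rw [h2]
  have rec2 : ∀ (Y : ℕ → Mat n), SolEq2 d a b z Y → ∀ k,
      Y (k + 2) = (z • Y (k + 1) - Y (k + 1) * d k - Y k * Aup a k) * (b k)⁻¹ := by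
    intro Y hY k
    have h2 : Y (k + 2) * b k = z • Y (k + 1) - Y (k + 1) * d k - Y k * Aup a k := by
      rw [← hY k]; abel
    calc Y (k + 2) = (Y (k + 2) * b k) * (b k)⁻¹ := by
          rw [mul_assoc, hmulinv _ (hb k), mul_one]
      _ = (z • Y (k + 1) - Y (k + 1) * d k - Y k * Aup a k) * (b k)⁻¹ := by rw [h2]
  -- main induction
  have main : ∀ k : ℕ,
      (P (k + 1) * Qp (k + 1) - Q (k + 1) * Pp (k + 1) = 0) ∧
      (P (k + 1) * Qp k - Q (k + 1) * Pp k = (Aup a k)⁻¹) ∧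
      (P k * Qp (k + 1) - Q k * Pp (k + 1) = -(Alo b k)⁻¹) ∧
      (P k * Qp k - Q k * Pp k = 0) := by
    intro k
    induction k with
    | zero =>
      have hneg : ((-1 : Mat n))⁻¹ = -1 := by
        apply Matrix.inv_eq_right_inv; simp
      refine ⟨?_, ?_, ?_, ?_⟩ <;>
        simp [hP0, hP1, hQ0, hQ1, hPp0, hPp1, hQp0, hQp1, Aup, Alo, hneg]
    | succ k ih =>
      obtain ⟨ihA, ihB, ihC, ihD⟩ := ih
      have hB1 : P (k + 2) * Qp (k + 1) - Q (k + 2) * Pp (k + 1) = (a k)⁻¹ := by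
        rw [rec1 P hP k, rec1 Q hQ k]
        have expand : (a k)⁻¹ * (z • P (k + 1) - d k * P (k + 1) - Alo b k * P k) * Qp (k + 1)
            - (a k)⁻¹ * (z • Q (k + 1) - d k * Q (k + 1) - Alo b k * Q k) * Pp (k + 1)
            = (a k)⁻¹ * (z • (P (k + 1) * Qp (k + 1) - Q (k + 1) * Pp (k + 1))
              - d k * (P (k + 1) * Qp (k + 1) - Q (k + 1) * Pp (k + 1))
              - Alo b k * (P k * Qp (k + 1) - Q k * Pp (k + 1))) := by
          simp only [mul_sub, sub_mul, mul_add, add_mul, smul_sub, smul_mul_assoc,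
            mul_smul_comm, mul_assoc]
          abel
        rw [expand, ihA, ihC]
        simp [mul_neg, hmulinv _ (hAlo k)]
      have hK : P (k + 2) * Qp k - Q (k + 2) * Pp k
          = (a k)⁻¹ * (z • (Aup a k)⁻¹ - d k * (Aup a k)⁻¹) := by
        rw [rec1 P hP k, rec1 Q hQ k]
        have expand : (a k)⁻¹ * (z • P (k + 1) - d k * P (k + 1) - Alo b k * P k) * Qp k
            - (a k)⁻¹ * (z • Q (k + 1) - d k * Q (k + 1) - Alo b k * Q k) * Pp k
            = (a k)⁻¹ * (z • (P (k + 1) * Qp k - Q (k + 1) * Pp k)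
              - d k * (P (k + 1) * Qp k - Q (k + 1) * Pp k)
              - Alo b k * (P k * Qp k - Q k * Pp k)) := by
          simp only [mul_sub, sub_mul, mul_add, add_mul, smul_sub, smul_mul_assoc,
            mul_smul_comm, mul_assoc]
          abel
        rw [expand, ihB, ihD]
        simp
      have hC1 : P (k + 1) * Qp (k + 2) - Q (k + 1) * Pp (k + 2) = -(b k)⁻¹ := by
        rw [rec2 Qp hQp k, rec2 Pp hPp k]
        have expand : P (k + 1) * ((z • Qp (k + 1) - Qp (k + 1) * d k - Qp k * Aup a k) * (b k)⁻¹)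
            - Q (k + 1) * ((z • Pp (k + 1) - Pp (k + 1) * d k - Pp k * Aup a k) * (b k)⁻¹)
            = (z • (P (k + 1) * Qp (k + 1) - Q (k + 1) * Pp (k + 1))
              - (P (k + 1) * Qp (k + 1) - Q (k + 1) * Pp (k + 1)) * d k
              - (P (k + 1) * Qp k - Q (k + 1) * Pp k) * Aup a k) * (b k)⁻¹ := by
          simp only [mul_sub, sub_mul, mul_add, add_mul, smul_sub, smul_mul_assoc,
            mul_smul_comm, mul_assoc]
          abel
        rw [expand, ihA, ihB]
        simp [hinvmul _ (hAup k)]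
      have hA1 : P (k + 2) * Qp (k + 2) - Q (k + 2) * Pp (k + 2) = 0 := by
        rw [rec2 Qp hQp k, rec2 Pp hPp k]
        have expand : P (k + 2) * ((z • Qp (k + 1) - Qp (k + 1) * d k - Qp k * Aup a k) * (b k)⁻¹)
            - Q (k + 2) * ((z • Pp (k + 1) - Pp (k + 1) * d k - Pp k * Aup a k) * (b k)⁻¹)
            = (z • (P (k + 2) * Qp (k + 1) - Q (k + 2) * Pp (k + 1))
              - (P (k + 2) * Qp (k + 1) - Q (k + 2) * Pp (k + 1)) * d k
              - (P (k + 2) * Qp k - Q (k + 2) * Pp k) * Aup a k) * (b k)⁻¹ := by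
          simp only [mul_sub, sub_mul, mul_add, add_mul, smul_sub, smul_mul_assoc,
            mul_smul_comm, mul_assoc]
          abel
        rw [expand, hB1, hK]
        have h1 : (a k)⁻¹ * (z • (Aup a k)⁻¹ - d k * (Aup a k)⁻¹) * Aup a k
            = (a k)⁻¹ * (z • (1 : Mat n)) - (a k)⁻¹ * d k := by
          simp only [mul_sub, sub_mul, smul_mul_assoc, mul_smul_comm, mul_assoc,
            hinvmul _ (hAup k)]
          simp [mul_sub]
        rw [h1]
        have : z • (a k)⁻¹ - (a k)⁻¹ * d k - ((a k)⁻¹ * z • (1 : Mat n) - (a k)⁻¹ * d k)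
            = 0 := by
          simp [mul_smul_comm]
        rw [this, zero_mul]
      exact ⟨hA1, by simpa [Aup] using hB1, by simpa [Alo] using hC1, ihA⟩
  refine ⟨(main j).1, ?_, ?_⟩
  · simpa [Aup] using (main (j + 1)).2.1
  · have h := (main (j + 1)).2.2.1
    simp only [Alo] at h
    calc Q (j + 1) * Pp (j + 2) - P (j + 1) * Qp (j + 2)
        = -(P (j + 1) * Qp (j + 2) - Q (j + 1) * Pp (j + 2)) := by abel
      _ = (b j)⁻¹ := by rw [h]; simp
end

section
/- For every z ∈ ℂ and every j ≥ 0 the following identities hold: Q⁺_{j+1}(z)A_{j+1,j}Q_j(z) − Q⁺_j(z)A_{j,j+1}Q_{j+1}(z) = O; P⁺_{j+1}(z)A_{j+1,j}P_j(z) − P⁺_j(z)A_{j,j+1}P_{j+1}(z) = O; P⁺_{j+1}(z)A_{j+1,j}Q_j(z) − P⁺_j(z)A_{j,j+1}Q_{j+1}(z) = E; and Q⁺_j(z)A_{j,j+1}P_{j+1}(z) − Q⁺_{j+1}(z)A_{j+1,j}P_j(z) = E. -/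
open Matrix Filter
open scoped BigOperators ENNReal

lemma statement1_key {n : ℕ} (d a b : ℕ → Mat n) (z : ℂ) (U V : ℕ → Mat n)
    (hU : SolEq2 d a b z U) (hV : SolEq1 d a b z V) (k : ℕ) :
    U (k + 1) * Alo b k * V k - U k * Aup a k * V (k + 1)
      = U 1 * Alo b 0 * V 0 - U 0 * Aup a 0 * V 1 := by
  induction k with
  | zero => rfl
  | succ k ih =>
    have h1 := hU k
    have h2 := hV k
    have e1 : U (k + 2) * b k = z • U (k + 1) - U k * Aup a k - U (k + 1) * d k := by
      rw [← h1]; abel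
    have e2 : a k * V (k + 2) = z • V (k + 1) - Alo b k * V k - d k * V (k + 1) := by
      rw [← h2]; abel
    rw [← ih]
    show U (k + 2) * b k * V (k + 1) - U (k + 1) * a k * V (k + 2) = _
    rw [e1, mul_assoc, e2, sub_mul, sub_mul, mul_sub, mul_sub,
      smul_mul_assoc, mul_smul_comm]
    simp only [← mul_assoc]
    abel

/-- the identities (ind2). -/
theorem statement1 {n : ℕ} (hn : 1 ≤ n) (d a b : ℕ → Mat n)
    (ha : ∀ j, IsUnit (a j)) (hb : ∀ j, IsUnit (b j)) (z : ℂ)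
    (P Q Pp Qp : ℕ → Mat n)
    (hP : SolEq1 d a b z P) (hQ : SolEq1 d a b z Q)
    (hPp : SolEq2 d a b z Pp) (hQp : SolEq2 d a b z Qp)
    (hP0 : P 0 = 1) (hP1 : P 1 = 0) (hQ0 : Q 0 = 0) (hQ1 : Q 1 = 1)
    (hPp0 : Pp 0 = 1) (hPp1 : Pp 1 = 0) (hQp0 : Qp 0 = 0) (hQp1 : Qp 1 = 1)
    (j : ℕ) :
    Qp (j + 2) * b j * Q (j + 1) - Qp (j + 1) * a j * Q (j + 2) = 0 ∧
    Pp (j + 2) * b j * P (j + 1) - Pp (j + 1) * a j * P (j + 2) = 0 ∧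
    Pp (j + 2) * b j * Q (j + 1) - Pp (j + 1) * a j * Q (j + 2) = 1 ∧
    Qp (j + 1) * a j * P (j + 2) - Qp (j + 2) * b j * P (j + 1) = 1 := by
  have base : ∀ (U V : ℕ → Mat n), U 1 * Alo b 0 * V 0 - U 0 * Aup a 0 * V 1
      = U 0 * V 1 - U 1 * V 0 := by
    intro U V
    show U 1 * (-1) * V 0 - U 0 * (-1) * V 1 = _
    simp only [mul_neg_one, neg_mul]
    abel
  have hQQ := statement1_key d a b z Qp Q hQp hQ (j + 1)
  have hPP := statement1_key d a b z Pp P hPp hP (j + 1)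
  have hPQ := statement1_key d a b z Pp Q hPp hQ (j + 1)
  have hQP := statement1_key d a b z Qp P hQp hP (j + 1)
  rw [base] at hQQ hPP hPQ hQP
  simp only [show Alo b (j + 1) = b j from rfl, show Aup a (j + 1) = a j from rfl] at hQQ hPP hPQ hQP
  rw [hQp0, hQp1, hQ0, hQ1] at hQQ
  rw [hPp0, hPp1, hP0, hP1] at hPP
  rw [hPp0, hPp1, hQ0, hQ1] at hPQ
  rw [hQp0, hQp1, hP0, hP1] at hQP
  refine ⟨by simpa using hQQ, by simpa using hPP, by simpa using hPQ, ?_⟩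
  have : Qp (j + 2) * b j * P (j + 1) - Qp (j + 1) * a j * P (j + 2) = -1 := by
    simpa using hQP
  rw [← neg_sub] at this
  linear_combination (norm := abel) -this
end

section
/- For every z ∈ ℂ, every j ≥ 0 and every complex n×n matrix F_j, the system of matrix equations Q_j(z)X + P_j(z)Y = O and A_{j,j+1}(Q_{j+1}(z)X + P_{j+1}(z)Y) = F_j in the unknown n×n matrices X, Y has the unique solution X = −P⁺_j(z)F_j and Y = Q⁺_j(z)F_j. -/
open Matrix Filter
open scoped BigOperators ENNReal

/-- Wronskian-type identity: for a solution `Y` of (1) and `Yp` of (2), the quantity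
`Yp j * Aup a j * Y (j+1) - Yp (j+1) * Alo b j * Y j` is constant in `j`. -/
lemma wronskian {n : ℕ} (d a b : ℕ → Mat n) (z : ℂ) (Yp Y : ℕ → Mat n)
    (h1 : SolEq1 d a b z Y) (h2 : SolEq2 d a b z Yp) :
    ∀ j, Yp j * Aup a j * Y (j+1) - Yp (j+1) * Alo b j * Y j
       = Yp 1 * Y 0 - Yp 0 * Y 1 := by
  intro j
  induction j with
  | zero =>
    show Yp 0 * Aup a 0 * Y 1 - Yp 1 * Alo b 0 * Y 0 = _
    simp only [Aup, Alo]
    noncomm_ring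
  | succ j ih =>
    have e1 := h1 j
    have e2 := h2 j
    rw [← ih]
    show Yp (j+1) * a j * Y (j+2) - Yp (j+2) * b j * Y (j+1) = _
    linear_combination (norm := noncomm_ring) Yp (j+1) * e1 - e2 * Y (j+1)

/-- the variation-of-constants system has the unique solution
`X = -P⁺_j(z) F_j`, `Y = Q⁺_j(z) F_j`. -/
theorem statement2 {n : ℕ} (hn : 1 ≤ n) (d a b : ℕ → Mat n)
    (ha : ∀ j, IsUnit (a j)) (hb : ∀ j, IsUnit (b j)) (z : ℂ)
    (P Q Pp Qp : ℕ → Mat n)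
    (hP : SolEq1 d a b z P) (hQ : SolEq1 d a b z Q)
    (hPp : SolEq2 d a b z Pp) (hQp : SolEq2 d a b z Qp)
    (hP0 : P 0 = 1) (hP1 : P 1 = 0) (hQ0 : Q 0 = 0) (hQ1 : Q 1 = 1)
    (hPp0 : Pp 0 = 1) (hPp1 : Pp 1 = 0) (hQp0 : Qp 0 = 0) (hQp1 : Qp 1 = 1)
    (j : ℕ) (F : Mat n) (X Y : Mat n) :
    (Q (j + 1) * X + P (j + 1) * Y = 0 ∧
      a j * (Q (j + 2) * X + P (j + 2) * Y) = F) ↔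
    (X = -(Pp (j + 1) * F) ∧ Y = Qp (j + 1) * F) := by
    -- the four Wronskian identities at index j+1
  have w1 : Pp (j+1) * a j * P (j+2) - Pp (j+2) * b j * P (j+1) = 0 := by
    have := wronskian d a b z Pp P hP hPp (j+1)
    simpa [Aup, Alo, hP0, hP1, hPp0, hPp1] using this
  have w2 : Pp (j+1) * a j * Q (j+2) - Pp (j+2) * b j * Q (j+1) = -1 := by
    have := wronskian d a b z Pp Q hQ hPp (j+1)
    simpa [Aup, Alo, hQ0, hQ1, hPp0, hPp1] using this
  have w3 : Qp (j+1) * a j * P (j+2) - Qp (j+2) * b j * P (j+1) = 1 := by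
    have := wronskian d a b z Qp P hP hQp (j+1)
    simpa [Aup, Alo, hP0, hP1, hQp0, hQp1] using this
  have w4 : Qp (j+1) * a j * Q (j+2) - Qp (j+2) * b j * Q (j+1) = 0 := by
    have := wronskian d a b z Qp Q hQ hQp (j+1)
    simpa [Aup, Alo, hQ0, hQ1, hQp0, hQp1] using this
  -- block matrices
  set NN : Matrix (Fin n ⊕ Fin n) (Fin n ⊕ Fin n) ℂ :=
    fromBlocks (Pp (j+2) * b j) (-(Pp (j+1))) (-(Qp (j+2) * b j)) (Qp (j+1)) with hNN
  set MM : Matrix (Fin n ⊕ Fin n) (Fin n ⊕ Fin n) ℂ :=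
    fromBlocks (Q (j+1)) (P (j+1)) (a j * Q (j+2)) (a j * P (j+2)) with hMM
  have g1 : Pp (j+2) * b j * Q (j+1) + -(Pp (j+1)) * (a j * Q (j+2)) = 1 := by
    linear_combination (norm := noncomm_ring) -w2
  have g2 : Pp (j+2) * b j * P (j+1) + -(Pp (j+1)) * (a j * P (j+2)) = 0 := by
    linear_combination (norm := noncomm_ring) -w1
  have g3 : -(Qp (j+2) * b j) * Q (j+1) + Qp (j+1) * (a j * Q (j+2)) = 0 := by
    linear_combination (norm := noncomm_ring) w4
  have g4 : -(Qp (j+2) * b j) * P (j+1) + Qp (j+1) * (a j * P (j+2)) = 1 := by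
    linear_combination (norm := noncomm_ring) w3
  have hNM : NN * MM = 1 := by
    rw [hNN, hMM, fromBlocks_multiply, g1, g2, g3, g4, fromBlocks_one]
  have hMN : MM * NN = 1 := mul_eq_one_comm.mp hNM
  rw [hMM, hNN, fromBlocks_multiply, ← fromBlocks_one] at hMN
  -- extract dual identities
  have d1 : Q (j+1) * Pp (j+2) * b j - P (j+1) * (Qp (j+2) * b j) = 1 := by
    have := congrArg Matrix.toBlocks₁₁ hMN
    simp only [toBlocks_fromBlocks₁₁] at this
    linear_combination (norm := noncomm_ring) this
  have d2 : P (j+1) * Qp (j+1) - Q (j+1) * Pp (j+1) = 0 := by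
    have := congrArg Matrix.toBlocks₁₂ hMN
    simp only [toBlocks_fromBlocks₁₂] at this
    linear_combination (norm := noncomm_ring) this
  have d3 : a j * P (j+2) * Qp (j+1) - a j * Q (j+2) * Pp (j+1) = 1 := by
    have := congrArg Matrix.toBlocks₂₂ hMN
    simp only [toBlocks_fromBlocks₂₂] at this
    linear_combination (norm := noncomm_ring) this
  constructor
  · rintro ⟨e1, e2⟩
    constructor
    · linear_combination (norm := noncomm_ring) (Pp (j+2) * b j) * e1 - Pp (j+1) * e2
        + w2 * X + w1 * Y
    · linear_combination (norm := noncomm_ring) -((Qp (j+2) * b j) * e1) + Qp (j+1) * e2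
        - w4 * X - w3 * Y
  · rintro ⟨rfl, rfl⟩
    constructor
    · linear_combination (norm := noncomm_ring) d2 * F
    · linear_combination (norm := noncomm_ring) d3 * F
end

section
/- (Representation (rep1).) Let z, z_0 ∈ ℂ and let (Y_j)_{j ≥ −1} be a solution of the matrix equation (1) at z. Then for every k ≥ 0 there exist complex n×n matrices C_k¹ and C_k² such that for all j ≥ k+1: Y_j = Q_j(z_0)C_k¹ + P_j(z_0)C_k² + (z − z_0)·Σ_{i=k}^{j−1} ( P_j(z_0)Q⁺_i(z_0) − Q_j(z_0)P⁺_i(z_0) )·Y_i. -/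
open Matrix Filter
open scoped BigOperators ENNReal

section Helpers

variable {n : ℕ} {d a b : ℕ → Mat n}

/-- Green's/Wronskian step identity. -/
lemma green_step {z z0 : ℂ} {V Y : ℕ → Mat n}
    (hV : SolEq2 d a b z0 V) (hY : SolEq1 d a b z Y) (j : ℕ) :
    (V (j+1) * Alo b j * Y j - V j * Aup a j * Y (j+1))
      - (V (j+2) * Alo b (j+1) * Y (j+1) - V (j+1) * Aup a (j+1) * Y (j+2))
      = (z - z0) • (V (j+1) * Y (j+1)) := by
  have h1 := hY j
  have h2 := hV j
  have key : (V (j+1) * Alo b j * Y j - V j * Aup a j * Y (j+1))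
      - (V (j+2) * b j * Y (j+1) - V (j+1) * a j * Y (j+2))
      = V (j+1) * (Alo b j * Y j + d j * Y (j + 1) + a j * Y (j + 2))
        - (V j * Aup a j + V (j + 1) * d j + V (j + 2) * b j) * Y (j+1) := by
    noncomm_ring
  show (V (j+1) * Alo b j * Y j - V j * Aup a j * Y (j+1))
      - (V (j+2) * b j * Y (j+1) - V (j+1) * a j * Y (j+2)) = _
  rw [key, h1, h2, mul_smul_comm, smul_mul_assoc, sub_smul]

/-- The Wronskian of a solution of (2) and a solution of (1) at the same `z0` is constant. -/
lemma green_const {z0 : ℂ} {V Y : ℕ → Mat n}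
    (hV : SolEq2 d a b z0 V) (hY : SolEq1 d a b z0 Y) (j : ℕ) :
    V (j+1) * Alo b j * Y j - V j * Aup a j * Y (j+1)
      = V 1 * Alo b 0 * Y 0 - V 0 * Aup a 0 * Y 1 := by
  induction j with
  | zero => rfl
  | succ j ih =>
    have h := green_step hV hY j
    rw [sub_self, zero_smul, sub_eq_zero] at h
    have h2 : V (j+1+1) * Alo b (j+1) * Y (j+1) - V (j+1) * Aup a (j+1) * Y (j+1+1)
        = V (j+1) * Alo b j * Y j - V j * Aup a j * Y (j+1) := h.symm
    rw [h2]; exact ih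

/-- Telescoping sum. -/
lemma tel_sum {M : Type*} [AddCommGroup M] (f : ℕ → M) {k j : ℕ} (hkj : k ≤ j) :
    ∑ i ∈ Finset.Ico k j, (f i - f (i+1)) = f k - f j := by
  induction j, hkj using Nat.le_induction with
  | base => simp
  | succ j hkj ih => rw [Finset.sum_Ico_succ_top hkj, ih]; abel

end Helpers

/-- representation (rep1): any solution `Y` of equation (1) at `z` can be
represented via the fundamental solutions at `z₀`. -/
theorem statement7 {n : ℕ} (hn : 1 ≤ n) (d a b : ℕ → Mat n)
    (ha : ∀ j, IsUnit (a j)) (hb : ∀ j, IsUnit (b j)) (z z0 : ℂ)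
    (P Q Pp Qp : ℕ → Mat n)
    (hP : SolEq1 d a b z0 P) (hQ : SolEq1 d a b z0 Q)
    (hPp : SolEq2 d a b z0 Pp) (hQp : SolEq2 d a b z0 Qp)
    (hP0 : P 0 = 1) (hP1 : P 1 = 0) (hQ0 : Q 0 = 0) (hQ1 : Q 1 = 1)
    (hPp0 : Pp 0 = 1) (hPp1 : Pp 1 = 0) (hQp0 : Qp 0 = 0) (hQp1 : Qp 1 = 1)
    (Y : ℕ → Mat n) (hY : SolEq1 d a b z Y) (k : ℕ) :
    ∃ C1 C2 : Mat n, ∀ j : ℕ, k + 1 ≤ j →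
      Y (j + 1) = Q (j + 1) * C1 + P (j + 1) * C2 +
        (z - z0) • ∑ i ∈ Finset.Ico k j,
          (P (j + 1) * Qp (i + 1) - Q (j + 1) * Pp (i + 1)) * Y (i + 1) := by

  have hAup : ∀ j, IsUnit (Aup a j) := by
    intro j
    cases j with
    | zero => simpa [Aup] using (isUnit_one (M := Mat n)).neg
    | succ j => exact ha j
  have hAlo : ∀ j, IsUnit (Alo b j) := by
    intro j
    cases j with
    | zero => simpa [Alo] using (isUnit_one (M := Mat n)).neg
    | succ j => exact hb j
  -- the four constant Wronskians
  have wPQ : ∀ j, Pp (j+1) * Alo b j * Q j - Pp j * Aup a j * Q (j+1) = 1 := by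
    intro j; rw [green_const hPp hQ j]; simp [Alo, Aup, hPp0, hPp1, hQ0, hQ1]
  have wPP : ∀ j, Pp (j+1) * Alo b j * P j - Pp j * Aup a j * P (j+1) = 0 := by
    intro j; rw [green_const hPp hP j]; simp [Alo, Aup, hPp0, hPp1, hP0, hP1]
  have wQQ : ∀ j, Qp (j+1) * Alo b j * Q j - Qp j * Aup a j * Q (j+1) = 0 := by
    intro j; rw [green_const hQp hQ j]; simp [Alo, Aup, hQp0, hQp1, hQ0, hQ1]
  have wQP : ∀ j, Qp (j+1) * Alo b j * P j - Qp j * Aup a j * P (j+1) = -1 := by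
    intro j; rw [green_const hQp hP j]; simp [Alo, Aup, hQp0, hQp1, hP0, hP1]
  -- the "transposed" Wronskian identities, by a block-matrix argument
  have key : ∀ j, Q (j+1) * Pp (j+1) = P (j+1) * Qp (j+1) ∧
      (P (j+1) * Qp j - Q (j+1) * Pp j) * Aup a j = 1 := by
    intro j
    have hWU : Matrix.fromBlocks (Pp (j+1) * Alo b j) (-(Pp j * Aup a j))
          (-(Qp (j+1) * Alo b j)) (Qp j * Aup a j)
        * Matrix.fromBlocks (Q j) (P j) (Q (j+1)) (P (j+1)) = 1 := by
      rw [Matrix.fromBlocks_multiply, ← Matrix.fromBlocks_one, Matrix.fromBlocks_inj]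
      refine ⟨?_, ?_, ?_, ?_⟩
      · calc Pp (j+1) * Alo b j * Q j + -(Pp j * Aup a j) * Q (j+1)
            = Pp (j+1) * Alo b j * Q j - Pp j * Aup a j * Q (j+1) := by noncomm_ring
          _ = 1 := wPQ j
      · calc Pp (j+1) * Alo b j * P j + -(Pp j * Aup a j) * P (j+1)
            = Pp (j+1) * Alo b j * P j - Pp j * Aup a j * P (j+1) := by noncomm_ring
          _ = 0 := wPP j
      · calc -(Qp (j+1) * Alo b j) * Q j + Qp j * Aup a j * Q (j+1)
            = -(Qp (j+1) * Alo b j * Q j - Qp j * Aup a j * Q (j+1)) := by noncomm_ring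
          _ = 0 := by rw [wQQ j, neg_zero]
      · calc -(Qp (j+1) * Alo b j) * P j + Qp j * Aup a j * P (j+1)
            = -(Qp (j+1) * Alo b j * P j - Qp j * Aup a j * P (j+1)) := by noncomm_ring
          _ = 1 := by rw [wQP j, neg_neg]
    have hUW := mul_eq_one_comm.mp hWU
    rw [Matrix.fromBlocks_multiply, ← Matrix.fromBlocks_one, Matrix.fromBlocks_inj] at hUW
    obtain ⟨h11, h12, h21, h22⟩ := hUW
    constructor
    · have h : (Q (j+1) * Pp (j+1) - P (j+1) * Qp (j+1)) * Alo b j = 0 * Alo b j := by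
        calc (Q (j+1) * Pp (j+1) - P (j+1) * Qp (j+1)) * Alo b j
            = Q (j+1) * (Pp (j+1) * Alo b j) + P (j+1) * -(Qp (j+1) * Alo b j) := by
              noncomm_ring
          _ = 0 := h21
          _ = 0 * Alo b j := by rw [zero_mul]
      exact sub_eq_zero.mp ((hAlo j).mul_right_cancel h)
    · calc (P (j+1) * Qp j - Q (j+1) * Pp j) * Aup a j
          = Q (j+1) * -(Pp j * Aup a j) + P (j+1) * (Qp j * Aup a j) := by noncomm_ring
        _ = 1 := h22
  refine ⟨Pp (k+1) * Alo b k * Y k - Pp k * Aup a k * Y (k+1),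
    -(Qp (k+1) * Alo b k * Y k - Qp k * Aup a k * Y (k+1)), ?_⟩
  intro j hj
  have hkj : k ≤ j := Nat.le_of_succ_le hj
  -- telescoping for any solution of (2) at z0
  have tel2 : ∀ V : ℕ → Mat n, SolEq2 d a b z0 V →
      (z - z0) • ∑ i ∈ Finset.Ico k j, V (i+1) * Y (i+1)
      = (V (k+1) * Alo b k * Y k - V k * Aup a k * Y (k+1))
        - (V (j+1) * Alo b j * Y j - V j * Aup a j * Y (j+1)) := by
    intro V hV
    calc (z - z0) • ∑ i ∈ Finset.Ico k j, V (i+1) * Y (i+1)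
        = ∑ i ∈ Finset.Ico k j,
            ((fun i => V (i+1) * Alo b i * Y i - V i * Aup a i * Y (i+1)) i
              - (fun i => V (i+1) * Alo b i * Y i - V i * Aup a i * Y (i+1)) (i+1)) := by
          rw [Finset.smul_sum]
          exact Finset.sum_congr rfl fun i _ => (green_step hV hY i).symm
      _ = _ := tel_sum _ hkj
  have sumsplit : ∑ i ∈ Finset.Ico k j, (P (j+1) * Qp (i+1) - Q (j+1) * Pp (i+1)) * Y (i+1)
      = P (j+1) * ∑ i ∈ Finset.Ico k j, Qp (i+1) * Y (i+1)
        - Q (j+1) * ∑ i ∈ Finset.Ico k j, Pp (i+1) * Y (i+1) := by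
    rw [Finset.mul_sum, Finset.mul_sum, ← Finset.sum_sub_distrib]
    exact Finset.sum_congr rfl fun i _ => by noncomm_ring
  have L : Y (j+1)
      = Q (j+1) * (Pp (j+1) * Alo b j * Y j - Pp j * Aup a j * Y (j+1))
        - P (j+1) * (Qp (j+1) * Alo b j * Y j - Qp j * Aup a j * Y (j+1)) := by
    obtain ⟨k1, k2⟩ := key j
    calc Y (j+1) = (1 : Mat n) * Y (j+1) := (one_mul _).symm
      _ = (0 : Mat n) * (Alo b j * Y j)
            + ((P (j+1) * Qp j - Q (j+1) * Pp j) * Aup a j) * Y (j+1) := by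
          rw [k2, zero_mul, zero_add, one_mul]
      _ = ((Q (j+1) * Pp (j+1) - P (j+1) * Qp (j+1)) : Mat n) * (Alo b j * Y j)
            + ((P (j+1) * Qp j - Q (j+1) * Pp j) * Aup a j) * Y (j+1) := by
          rw [k1, sub_self]
      _ = Q (j+1) * (Pp (j+1) * Alo b j * Y j - Pp j * Aup a j * Y (j+1))
            - P (j+1) * (Qp (j+1) * Alo b j * Y j - Qp j * Aup a j * Y (j+1)) := by
          noncomm_ring
  rw [sumsplit, smul_sub, ← mul_smul_comm, ← mul_smul_comm, tel2 Qp hQp, tel2 Pp hPp]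
  nth_rewrite 1 [L]
  noncomm_ring
end

section
/- (Representation (rep2).) Let z, z_0 ∈ ℂ and let (Y⁺_j)_{j ≥ −1} be a solution of the matrix equation (2) at z. Then for every k ≥ 0 there exist complex n×n matrices C_k^{1,+} and C_k^{2,+} such that for all j ≥ k+1: Y⁺_j = C_k^{1,+}Q⁺_j(z_0) + C_k^{2,+}P⁺_j(z_0) + (z − z_0)·Σ_{i=k}^{j−1} Y⁺_i·( Q_i(z_0)P⁺_j(z_0) − P_i(z_0)Q⁺_j(z_0) ). -/
open Matrix Filter
open scoped BigOperators ENNReal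

/-- The representation candidate. -/
noncomputable def rep {n : ℕ} (z z0 : ℂ) (P Q Pp Qp Y : ℕ → Mat n) (k : ℕ) (C1 C2 : Mat n) (j : ℕ) :
    Mat n :=
  C1 * Qp (j + 1) + C2 * Pp (j + 1) +
    (z - z0) • ∑ i ∈ Finset.Ico k j,
      Y (i + 1) * (Q (i + 1) * Pp (j + 1) - P (i + 1) * Qp (j + 1))

/-- Constancy of the mixed Wronskian. -/
lemma wronsk {n : ℕ} (d a b : ℕ → Mat n) (z0 : ℂ) (U V : ℕ → Mat n)
    (hU : SolEq1 d a b z0 U) (hV : SolEq2 d a b z0 V) (j : ℕ) :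
    V j * Aup a j * U (j + 1) - V (j + 1) * Alo b j * U j
      = V 0 * Aup a 0 * U 1 - V 1 * Alo b 0 * U 0 := by
  induction j with
  | zero => rfl
  | succ j ih =>
    rw [← ih]
    have hu := hU j
    have hv := hV j
    have hu' : a j * U (j + 2) = z0 • U (j + 1) - Alo b j * U j - d j * U (j + 1) := by
      rw [eq_sub_iff_add_eq, eq_sub_iff_add_eq, ← hu]; abel
    have hv' : V (j + 2) * b j = z0 • V (j + 1) - V j * Aup a j - V (j + 1) * d j := by
      rw [eq_sub_iff_add_eq, eq_sub_iff_add_eq, ← hv]; abel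
    have hAup : Aup a (j + 1) = a j := rfl
    have hAlo : Alo b (j + 1) = b j := rfl
    rw [hAup, hAlo]
    calc V (j + 1) * a j * U (j + 2) - V (j + 2) * b j * U (j + 1)
        = V (j + 1) * (a j * U (j + 2)) - V (j + 2) * b j * U (j + 1) := by
          rw [mul_assoc]
      _ = V (j + 1) * (z0 • U (j + 1) - Alo b j * U j - d j * U (j + 1))
            - (z0 • V (j + 1) - V j * Aup a j - V (j + 1) * d j) * U (j + 1) := by
          rw [hu', hv']
      _ = V j * Aup a j * U (j + 1) - V (j + 1) * Alo b j * U j := by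
          simp only [mul_sub, sub_mul, mul_smul_comm, smul_mul_assoc, mul_assoc]
          abel

/-- The key algebraic identities between the fundamental solutions. -/
lemma keyIdent {n : ℕ} (d a b : ℕ → Mat n)
    (ha : ∀ j, IsUnit (a j)) (hb : ∀ j, IsUnit (b j)) (z0 : ℂ)
    (P Q Pp Qp : ℕ → Mat n)
    (hP : SolEq1 d a b z0 P) (hQ : SolEq1 d a b z0 Q)
    (hPp : SolEq2 d a b z0 Pp) (hQp : SolEq2 d a b z0 Qp)
    (hP0 : P 0 = 1) (hP1 : P 1 = 0) (hQ0 : Q 0 = 0) (hQ1 : Q 1 = 1)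
    (hPp0 : Pp 0 = 1) (hPp1 : Pp 1 = 0) (hQp0 : Qp 0 = 0) (hQp1 : Qp 1 = 1) (j : ℕ) :
    (Aup a j * P (j + 1) * Qp j - Aup a j * Q (j + 1) * Pp j = 1) ∧
    (Aup a j * P (j + 1) * Qp (j + 1) - Aup a j * Q (j + 1) * Pp (j + 1) = 0) ∧
    (Q j * Pp j = P j * Qp j) ∧
    (Alo b j * (Q j * Pp (j + 1)) - Alo b j * (P j * Qp (j + 1)) = 1) ∧
    ((Q j * Pp (j + 1) - P j * Qp (j + 1)) * Alo b j = 1) := by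
  have hA0 : Aup a 0 = (-1 : Mat n) := rfl
  have hL0 : Alo b 0 = (-1 : Mat n) := rfl
  have w1 : Pp j * Aup a j * P (j + 1) - Pp (j + 1) * Alo b j * P j = 0 := by
    rw [wronsk d a b z0 P Pp hP hPp j, hA0, hL0, hPp0, hPp1, hP0, hP1]; simp
  have w2 : Qp j * Aup a j * Q (j + 1) - Qp (j + 1) * Alo b j * Q j = 0 := by
    rw [wronsk d a b z0 Q Qp hQ hQp j, hA0, hL0, hQp0, hQp1, hQ0, hQ1]; simp
  have w3 : Qp j * Aup a j * P (j + 1) - Qp (j + 1) * Alo b j * P j = 1 := by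
    rw [wronsk d a b z0 P Qp hP hQp j, hA0, hL0, hQp0, hQp1, hP0, hP1]; simp
  have w4 : Pp j * Aup a j * Q (j + 1) - Pp (j + 1) * Alo b j * Q j = -1 := by
    rw [wronsk d a b z0 Q Pp hQ hPp j, hA0, hL0, hPp0, hPp1, hQ0, hQ1]; simp
  have hNM :
      Matrix.fromBlocks (Qp j) (Qp (j + 1)) (Pp j) (Pp (j + 1)) *
        Matrix.fromBlocks (Aup a j * P (j + 1)) (-(Aup a j * Q (j + 1)))
          (-(Alo b j * P j)) (Alo b j * Q j) = 1 := by
    rw [Matrix.fromBlocks_multiply, ← Matrix.fromBlocks_one]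
    rw [Matrix.fromBlocks_inj]
    refine ⟨?_, ?_, ?_, ?_⟩
    · rw [mul_neg, ← mul_assoc, ← mul_assoc, ← sub_eq_add_neg]; exact w3
    · rw [mul_neg, ← mul_assoc, ← mul_assoc, neg_add_eq_sub, ← neg_sub, w2, neg_zero]
    · rw [mul_neg, ← mul_assoc, ← mul_assoc, ← sub_eq_add_neg]; exact w1
    · rw [mul_neg, ← mul_assoc, ← mul_assoc, neg_add_eq_sub, ← neg_sub, w4, neg_neg]
  have hMN := mul_eq_one_comm.mp hNM
  rw [Matrix.fromBlocks_multiply, ← Matrix.fromBlocks_one, Matrix.fromBlocks_inj] at hMN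
  obtain ⟨e1, e2, e3, e4⟩ := hMN
  have hAloUnit : IsUnit (Alo b j) := by
    cases j with
    | zero => rw [hL0]; exact isUnit_one.neg
    | succ j => exact hb j
  have E1 : Aup a j * P (j + 1) * Qp j - Aup a j * Q (j + 1) * Pp j = 1 := by
    rw [← e1, neg_mul, ← sub_eq_add_neg]
  have E2 : Aup a j * P (j + 1) * Qp (j + 1) - Aup a j * Q (j + 1) * Pp (j + 1) = 0 := by
    rw [← e2, neg_mul, ← sub_eq_add_neg]
  have E3 : Q j * Pp j = P j * Qp j := by
    apply hAloUnit.mul_left_cancel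
    have : Alo b j * (Q j * Pp j) - Alo b j * (P j * Qp j) = 0 := by
      rw [← e3, neg_mul, neg_add_eq_sub, ← neg_sub, neg_eq_iff_eq_neg, neg_sub, mul_assoc,
        mul_assoc]
    rw [← sub_eq_zero]; exact this.symm ▸ this
  have E4 : Alo b j * (Q j * Pp (j + 1)) - Alo b j * (P j * Qp (j + 1)) = 1 := by
    rw [← e4, neg_mul, neg_add_eq_sub, mul_assoc, mul_assoc]
  have E5 : (Q j * Pp (j + 1) - P j * Qp (j + 1)) * Alo b j = 1 := by
    rw [← mul_eq_one_comm, mul_sub]; exact E4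
  exact ⟨E1, E2, E3, E4, E5⟩

/-- The summand recursion step. -/
lemma summand {n : ℕ} (z0 : ℂ) (Yi Qi Pi p1 p2 p3 q1 q2 q3 A D B : Mat n)
    (hp : p1 * A + p2 * D + p3 * B = z0 • p2)
    (hq : q1 * A + q2 * D + q3 * B = z0 • q2) :
    Yi * (Qi * p1 - Pi * q1) * A + Yi * (Qi * p2 - Pi * q2) * D
      + Yi * (Qi * p3 - Pi * q3) * B = z0 • (Yi * (Qi * p2 - Pi * q2)) := by
  have h : Yi * (Qi * p1 - Pi * q1) * A + Yi * (Qi * p2 - Pi * q2) * D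
      + Yi * (Qi * p3 - Pi * q3) * B
      = Yi * (Qi * (p1 * A + p2 * D + p3 * B)) - Yi * (Pi * (q1 * A + q2 * D + q3 * B)) := by
    noncomm_ring
  rw [h, hp, hq]
  simp only [mul_smul_comm, ← smul_sub, ← mul_sub]

/-- representation (rep2): any solution `Y⁺` of equation (2) at `z` can be
represented via the fundamental solutions at `z₀`. -/
theorem statement8 {n : ℕ} (hn : 1 ≤ n) (d a b : ℕ → Mat n)
    (ha : ∀ j, IsUnit (a j)) (hb : ∀ j, IsUnit (b j)) (z z0 : ℂ)
    (P Q Pp Qp : ℕ → Mat n)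
    (hP : SolEq1 d a b z0 P) (hQ : SolEq1 d a b z0 Q)
    (hPp : SolEq2 d a b z0 Pp) (hQp : SolEq2 d a b z0 Qp)
    (hP0 : P 0 = 1) (hP1 : P 1 = 0) (hQ0 : Q 0 = 0) (hQ1 : Q 1 = 1)
    (hPp0 : Pp 0 = 1) (hPp1 : Pp 1 = 0) (hQp0 : Qp 0 = 0) (hQp1 : Qp 1 = 1)
    (Y : ℕ → Mat n) (hY : SolEq2 d a b z Y) (k : ℕ) :
    ∃ C1 C2 : Mat n, ∀ j : ℕ, k + 1 ≤ j →
      Y (j + 1) = C1 * Qp (j + 1) + C2 * Pp (j + 1) +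
        (z - z0) • ∑ i ∈ Finset.Ico k j,
          Y (i + 1) * (Q (i + 1) * Pp (j + 1) - P (i + 1) * Qp (j + 1)) := by
  have KEY := keyIdent d a b ha hb z0 P Q Pp Qp hP hQ hPp hQp hP0 hP1 hQ0 hQ1 hPp0 hPp1
    hQp0 hQp1
  -- base data
  obtain ⟨t, ht⟩ : ∃ t : Mat n,
      t = Y (k + 2) - (z - z0) • (Y (k + 1) * (Q (k + 1) * Pp (k + 2) - P (k + 1) * Qp (k + 2)))
    := ⟨_, rfl⟩
  obtain ⟨c1, hc1⟩ : ∃ c : Mat n,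
      c = Y (k + 1) * (Aup a (k + 1) * P (k + 2)) - t * (Alo b (k + 1) * P (k + 1)) := ⟨_, rfl⟩
  obtain ⟨c2, hc2⟩ : ∃ c : Mat n,
      c = t * (Alo b (k + 1) * Q (k + 1)) - Y (k + 1) * (Aup a (k + 1) * Q (k + 2)) := ⟨_, rfl⟩
  have K1 : Aup a (k + 1) * P (k + 2) * Qp (k + 1) - Aup a (k + 1) * Q (k + 2) * Pp (k + 1) = 1 :=
    (KEY (k + 1)).1
  have K2 : Aup a (k + 1) * P (k + 2) * Qp (k + 2) - Aup a (k + 1) * Q (k + 2) * Pp (k + 2) = 0 :=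
    (KEY (k + 1)).2.1
  have K3 : Q (k + 1) * Pp (k + 1) = P (k + 1) * Qp (k + 1) := (KEY (k + 1)).2.2.1
  have K4 : Alo b (k + 1) * (Q (k + 1) * Pp (k + 2)) - Alo b (k + 1) * (P (k + 1) * Qp (k + 2)) = 1
    := (KEY (k + 1)).2.2.2.1
  have base1 : c1 * Qp (k + 1) + c2 * Pp (k + 1) = Y (k + 1) := by
    rw [hc1, hc2]
    have e : (Y (k + 1) * (Aup a (k + 1) * P (k + 2)) - t * (Alo b (k + 1) * P (k + 1)))
          * Qp (k + 1)
        + (t * (Alo b (k + 1) * Q (k + 1)) - Y (k + 1) * (Aup a (k + 1) * Q (k + 2)))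
          * Pp (k + 1)
        = Y (k + 1) * (Aup a (k + 1) * P (k + 2) * Qp (k + 1)
            - Aup a (k + 1) * Q (k + 2) * Pp (k + 1))
          + t * (Alo b (k + 1) * (Q (k + 1) * Pp (k + 1))
            - Alo b (k + 1) * (P (k + 1) * Qp (k + 1))) := by noncomm_ring
    rw [e, K1, K3, sub_self, mul_zero, add_zero, mul_one]
  have base2 : c1 * Qp (k + 2) + c2 * Pp (k + 2) = t := by
    rw [hc1, hc2]
    have e : (Y (k + 1) * (Aup a (k + 1) * P (k + 2)) - t * (Alo b (k + 1) * P (k + 1)))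
          * Qp (k + 2)
        + (t * (Alo b (k + 1) * Q (k + 1)) - Y (k + 1) * (Aup a (k + 1) * Q (k + 2)))
          * Pp (k + 2)
        = Y (k + 1) * (Aup a (k + 1) * P (k + 2) * Qp (k + 2)
            - Aup a (k + 1) * Q (k + 2) * Pp (k + 2))
          + t * (Alo b (k + 1) * (Q (k + 1) * Pp (k + 2))
            - Alo b (k + 1) * (P (k + 1) * Qp (k + 2))) := by noncomm_ring
    rw [e, K2, K4, mul_zero, zero_add, mul_one]
  refine ⟨c1, c2, ?_⟩
  have main : ∀ m : ℕ, Y (k + m + 1) = rep z z0 P Q Pp Qp Y k c1 c2 (k + m) ∧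
      Y (k + m + 2) = rep z z0 P Q Pp Qp Y k c1 c2 (k + m + 1) := by
    intro m
    induction m with
    | zero =>
      constructor
      · show Y (k + 1) = c1 * Qp (k + 1) + c2 * Pp (k + 1) + (z - z0) •
          ∑ i ∈ Finset.Ico k k, Y (i + 1) * (Q (i + 1) * Pp (k + 1) - P (i + 1) * Qp (k + 1))
        rw [Finset.Ico_self, Finset.sum_empty, smul_zero, add_zero, base1]
      · show Y (k + 2) = c1 * Qp (k + 2) + c2 * Pp (k + 2) + (z - z0) •
          ∑ i ∈ Finset.Ico k (k + 1),
            Y (i + 1) * (Q (i + 1) * Pp (k + 2) - P (i + 1) * Qp (k + 2))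
        rw [Finset.sum_Ico_succ_top (le_refl k), Finset.Ico_self, Finset.sum_empty, zero_add,
          base2, ht]
        abel
    | succ m ih =>
      obtain ⟨ih1, ih2⟩ := ih
      refine ⟨ih2, ?_⟩
      -- restate inductive hypotheses with normalized indices
      have h1' : Y (k + m + 1) = c1 * Qp (k + m + 1) + c2 * Pp (k + m + 1) + (z - z0) •
          ∑ i ∈ Finset.Ico k (k + m),
            Y (i + 1) * (Q (i + 1) * Pp (k + m + 1) - P (i + 1) * Qp (k + m + 1)) := ih1
      have h2' : Y (k + m + 2) = c1 * Qp (k + m + 2) + c2 * Pp (k + m + 2) + (z - z0) •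
          ∑ i ∈ Finset.Ico k (k + m + 1),
            Y (i + 1) * (Q (i + 1) * Pp (k + m + 2) - P (i + 1) * Qp (k + m + 2)) := ih2
      rw [Finset.sum_Ico_succ_top (Nat.le_add_right k m)] at h2'
      -- recurrences at index k+m+1
      have hqrec : Qp (k + m + 1) * Aup a (k + m + 1) + Qp (k + m + 2) * d (k + m + 1)
          + Qp (k + m + 3) * b (k + m + 1) = z0 • Qp (k + m + 2) := hQp (k + m + 1)
      have hprec : Pp (k + m + 1) * Aup a (k + m + 1) + Pp (k + m + 2) * d (k + m + 1)
          + Pp (k + m + 3) * b (k + m + 1) = z0 • Pp (k + m + 2) := hPp (k + m + 1)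
      have hy : Y (k + m + 1) * Aup a (k + m + 1) + Y (k + m + 2) * d (k + m + 1)
          + Y (k + m + 3) * b (k + m + 1) = z • Y (k + m + 2) := hY (k + m + 1)
      have hYB : Y (k + m + 3) * b (k + m + 1) = z • Y (k + m + 2)
          - Y (k + m + 1) * Aup a (k + m + 1) - Y (k + m + 2) * d (k + m + 1) := by
        rw [eq_sub_iff_add_eq, eq_sub_iff_add_eq, ← hy]; abel
      have hsum : (∑ i ∈ Finset.Ico k (k + m),
            Y (i + 1) * (Q (i + 1) * Pp (k + m + 1) - P (i + 1) * Qp (k + m + 1)))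
            * Aup a (k + m + 1)
          + (∑ i ∈ Finset.Ico k (k + m),
            Y (i + 1) * (Q (i + 1) * Pp (k + m + 2) - P (i + 1) * Qp (k + m + 2)))
            * d (k + m + 1)
          + (∑ i ∈ Finset.Ico k (k + m),
            Y (i + 1) * (Q (i + 1) * Pp (k + m + 3) - P (i + 1) * Qp (k + m + 3)))
            * b (k + m + 1)
          = z0 • ∑ i ∈ Finset.Ico k (k + m),
            Y (i + 1) * (Q (i + 1) * Pp (k + m + 2) - P (i + 1) * Qp (k + m + 2)) := by
        rw [Finset.sum_mul, Finset.sum_mul, Finset.sum_mul, Finset.smul_sum,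
          ← Finset.sum_add_distrib, ← Finset.sum_add_distrib]
        exact Finset.sum_congr rfl fun i _ =>
          summand z0 _ _ _ _ _ _ _ _ _ _ _ _ hprec hqrec
      have hJ : Y (k + m + 1) * (Q (k + m + 1) * Pp (k + m + 2) - P (k + m + 1) * Qp (k + m + 2))
            * d (k + m + 1)
          + Y (k + m + 1) * (Q (k + m + 1) * Pp (k + m + 3) - P (k + m + 1) * Qp (k + m + 3))
            * b (k + m + 1)
          = z0 • (Y (k + m + 1)
            * (Q (k + m + 1) * Pp (k + m + 2) - P (k + m + 1) * Qp (k + m + 2))) := by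
        have h := summand z0 (Y (k + m + 1)) (Q (k + m + 1)) (P (k + m + 1))
          (Pp (k + m + 1)) (Pp (k + m + 2)) (Pp (k + m + 3))
          (Qp (k + m + 1)) (Qp (k + m + 2)) (Qp (k + m + 3))
          (Aup a (k + m + 1)) (d (k + m + 1)) (b (k + m + 1)) hprec hqrec
        have h0 : Q (k + m + 1) * Pp (k + m + 1) - P (k + m + 1) * Qp (k + m + 1) = 0 :=
          sub_eq_zero_of_eq (KEY (k + m + 1)).2.2.1
        rw [h0, mul_zero, zero_mul, zero_add] at h
        exact h
      have k5 : (Q (k + m + 2) * Pp (k + m + 3) - P (k + m + 2) * Qp (k + m + 3))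
          * b (k + m + 1) = 1 := (KEY (k + m + 2)).2.2.2.2
      have hg : Y (k + m + 2) * (Q (k + m + 2) * Pp (k + m + 3) - P (k + m + 2) * Qp (k + m + 3))
          * b (k + m + 1) = Y (k + m + 2) := by
        rw [mul_assoc, k5, mul_one]
      -- the central computation
      have hstar :
          (c1 * Qp (k + m + 1) + c2 * Pp (k + m + 1) + (z - z0) •
            ∑ i ∈ Finset.Ico k (k + m),
              Y (i + 1) * (Q (i + 1) * Pp (k + m + 1) - P (i + 1) * Qp (k + m + 1)))
            * Aup a (k + m + 1)
          + (c1 * Qp (k + m + 2) + c2 * Pp (k + m + 2) + (z - z0) •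
            ((∑ i ∈ Finset.Ico k (k + m),
              Y (i + 1) * (Q (i + 1) * Pp (k + m + 2) - P (i + 1) * Qp (k + m + 2)))
              + Y (k + m + 1)
                * (Q (k + m + 1) * Pp (k + m + 2) - P (k + m + 1) * Qp (k + m + 2))))
            * d (k + m + 1)
          + (c1 * Qp (k + m + 3) + c2 * Pp (k + m + 3) + (z - z0) •
            ((∑ i ∈ Finset.Ico k (k + m),
              Y (i + 1) * (Q (i + 1) * Pp (k + m + 3) - P (i + 1) * Qp (k + m + 3)))
              + Y (k + m + 1)
                * (Q (k + m + 1) * Pp (k + m + 3) - P (k + m + 1) * Qp (k + m + 3))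
              + Y (k + m + 2)
                * (Q (k + m + 2) * Pp (k + m + 3) - P (k + m + 2) * Qp (k + m + 3))))
            * b (k + m + 1)
          = z0 • (c1 * Qp (k + m + 2) + c2 * Pp (k + m + 2) + (z - z0) •
            ((∑ i ∈ Finset.Ico k (k + m),
              Y (i + 1) * (Q (i + 1) * Pp (k + m + 2) - P (i + 1) * Qp (k + m + 2)))
              + Y (k + m + 1)
                * (Q (k + m + 1) * Pp (k + m + 2) - P (k + m + 1) * Qp (k + m + 2))))
            + (z - z0) • Y (k + m + 2) := by
        have step1 : (c1 * Qp (k + m + 1) + c2 * Pp (k + m + 1) + (z - z0) •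
            ∑ i ∈ Finset.Ico k (k + m),
              Y (i + 1) * (Q (i + 1) * Pp (k + m + 1) - P (i + 1) * Qp (k + m + 1)))
            * Aup a (k + m + 1)
          + (c1 * Qp (k + m + 2) + c2 * Pp (k + m + 2) + (z - z0) •
            ((∑ i ∈ Finset.Ico k (k + m),
              Y (i + 1) * (Q (i + 1) * Pp (k + m + 2) - P (i + 1) * Qp (k + m + 2)))
              + Y (k + m + 1)
                * (Q (k + m + 1) * Pp (k + m + 2) - P (k + m + 1) * Qp (k + m + 2))))
            * d (k + m + 1)
          + (c1 * Qp (k + m + 3) + c2 * Pp (k + m + 3) + (z - z0) •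
            ((∑ i ∈ Finset.Ico k (k + m),
              Y (i + 1) * (Q (i + 1) * Pp (k + m + 3) - P (i + 1) * Qp (k + m + 3)))
              + Y (k + m + 1)
                * (Q (k + m + 1) * Pp (k + m + 3) - P (k + m + 1) * Qp (k + m + 3))
              + Y (k + m + 2)
                * (Q (k + m + 2) * Pp (k + m + 3) - P (k + m + 2) * Qp (k + m + 3))))
            * b (k + m + 1)
          = c1 * (Qp (k + m + 1) * Aup a (k + m + 1) + Qp (k + m + 2) * d (k + m + 1)
              + Qp (k + m + 3) * b (k + m + 1))
            + c2 * (Pp (k + m + 1) * Aup a (k + m + 1) + Pp (k + m + 2) * d (k + m + 1)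
              + Pp (k + m + 3) * b (k + m + 1))
            + ((z - z0) • ((∑ i ∈ Finset.Ico k (k + m),
                Y (i + 1) * (Q (i + 1) * Pp (k + m + 1) - P (i + 1) * Qp (k + m + 1)))
                * Aup a (k + m + 1)
              + (∑ i ∈ Finset.Ico k (k + m),
                Y (i + 1) * (Q (i + 1) * Pp (k + m + 2) - P (i + 1) * Qp (k + m + 2)))
                * d (k + m + 1)
              + (∑ i ∈ Finset.Ico k (k + m),
                Y (i + 1) * (Q (i + 1) * Pp (k + m + 3) - P (i + 1) * Qp (k + m + 3)))
                * b (k + m + 1))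
            + (z - z0) • (Y (k + m + 1)
                * (Q (k + m + 1) * Pp (k + m + 2) - P (k + m + 1) * Qp (k + m + 2))
                * d (k + m + 1)
              + Y (k + m + 1)
                * (Q (k + m + 1) * Pp (k + m + 3) - P (k + m + 1) * Qp (k + m + 3))
                * b (k + m + 1))
            + (z - z0) • (Y (k + m + 2)
                * (Q (k + m + 2) * Pp (k + m + 3) - P (k + m + 2) * Qp (k + m + 3))
                * b (k + m + 1))) := by
          simp only [add_mul, mul_add, smul_add, smul_mul_assoc, mul_assoc]
          abel
        rw [step1, hqrec, hprec, hsum, hJ, hg]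
        simp only [mul_smul_comm, smul_add]
        module
      -- finish
      show Y (k + m + 3) = c1 * Qp (k + m + 3) + c2 * Pp (k + m + 3) + (z - z0) •
        ∑ i ∈ Finset.Ico k (k + m + 1 + 1),
          Y (i + 1) * (Q (i + 1) * Pp (k + m + 3) - P (i + 1) * Qp (k + m + 3))
      rw [Finset.sum_Ico_succ_top (show k ≤ k + m + 1 by omega),
        Finset.sum_Ico_succ_top (Nat.le_add_right k m)]
      simp only [show k + m + 1 + 1 = k + m + 2 from rfl]
      apply (hb (k + m + 1)).mul_right_cancel
      rw [hYB]
      have hX3 : (c1 * Qp (k + m + 3) + c2 * Pp (k + m + 3) + (z - z0) •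
            ((∑ i ∈ Finset.Ico k (k + m),
              Y (i + 1) * (Q (i + 1) * Pp (k + m + 3) - P (i + 1) * Qp (k + m + 3)))
              + Y (k + m + 1)
                * (Q (k + m + 1) * Pp (k + m + 3) - P (k + m + 1) * Qp (k + m + 3))
              + Y (k + m + 2)
                * (Q (k + m + 2) * Pp (k + m + 3) - P (k + m + 2) * Qp (k + m + 3))))
            * b (k + m + 1)
          = z0 • (c1 * Qp (k + m + 2) + c2 * Pp (k + m + 2) + (z - z0) •
            ((∑ i ∈ Finset.Ico k (k + m),
              Y (i + 1) * (Q (i + 1) * Pp (k + m + 2) - P (i + 1) * Qp (k + m + 2)))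
              + Y (k + m + 1)
                * (Q (k + m + 1) * Pp (k + m + 2) - P (k + m + 1) * Qp (k + m + 2))))
            + (z - z0) • Y (k + m + 2)
            - (c1 * Qp (k + m + 1) + c2 * Pp (k + m + 1) + (z - z0) •
              ∑ i ∈ Finset.Ico k (k + m),
                Y (i + 1) * (Q (i + 1) * Pp (k + m + 1) - P (i + 1) * Qp (k + m + 1)))
              * Aup a (k + m + 1)
            - (c1 * Qp (k + m + 2) + c2 * Pp (k + m + 2) + (z - z0) •
              ((∑ i ∈ Finset.Ico k (k + m),
                Y (i + 1) * (Q (i + 1) * Pp (k + m + 2) - P (i + 1) * Qp (k + m + 2)))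
                + Y (k + m + 1)
                  * (Q (k + m + 1) * Pp (k + m + 2) - P (k + m + 1) * Qp (k + m + 2))))
              * d (k + m + 1) := by
        rw [eq_sub_iff_add_eq, eq_sub_iff_add_eq, ← hstar]; abel
      rw [hX3, ← h1', ← h2']
      module
  intro j hj
  obtain ⟨m, rfl⟩ : ∃ m, j = k + m + 1 := ⟨j - k - 1, by omega⟩
  exact (main m).2
end

section
/- Let 1 ≤ p ≤ 2. Suppose that for some z_0 ∈ ℂ every solution of the vector equation (1v) at z_0 belongs to l^p_n and every solution of the vector equation (2v) at z_0 belongs to l^p_n. Then for every z ∈ ℂ, every solution of (1v) at z belongs to l^p_n and every solution of (2v) at z belongs to l^p_n. -/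
open Matrix Filter
open scoped BigOperators ENNReal

/-! ### auxiliary development -/

namespace St11

/-- Solutions of the matrix equation (1) by recursion. -/
noncomputable def mkY {n : ℕ} (d a b : ℕ → Mat n) (z0 : ℂ) (W0 W1 : Mat n) : ℕ → Mat n
  | 0 => W0
  | 1 => W1
  | (j+2) => (a j)⁻¹ *
      (z0 • mkY d a b z0 W0 W1 (j+1) - Alo b j * mkY d a b z0 W0 W1 j
        - d j * mkY d a b z0 W0 W1 (j+1))

/-- Solutions of the matrix equation (2) by recursion. -/
noncomputable def mkT {n : ℕ} (d a b : ℕ → Mat n) (z0 : ℂ) (W0 W1 : Mat n) : ℕ → Mat n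
  | 0 => W0
  | 1 => W1
  | (j+2) => (z0 • mkT d a b z0 W0 W1 (j+1) - mkT d a b z0 W0 W1 (j+1) * d j
        - mkT d a b z0 W0 W1 j * Aup a j) * (b j)⁻¹

lemma mkY_succ_succ {n : ℕ} (d a b : ℕ → Mat n) (z0 : ℂ) (W0 W1 : Mat n) (j : ℕ) :
    mkY d a b z0 W0 W1 (j+2) = (a j)⁻¹ *
      (z0 • mkY d a b z0 W0 W1 (j+1) - Alo b j * mkY d a b z0 W0 W1 j
        - d j * mkY d a b z0 W0 W1 (j+1)) := rfl

lemma mkT_succ_succ {n : ℕ} (d a b : ℕ → Mat n) (z0 : ℂ) (W0 W1 : Mat n) (j : ℕ) :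
    mkT d a b z0 W0 W1 (j+2) = (z0 • mkT d a b z0 W0 W1 (j+1) - mkT d a b z0 W0 W1 (j+1) * d j
        - mkT d a b z0 W0 W1 j * Aup a j) * (b j)⁻¹ := rfl

lemma mkY_solves {n : ℕ} (d a b : ℕ → Mat n) (ha : ∀ j, IsUnit (a j)) (z0 : ℂ) (W0 W1 : Mat n) :
    SolEq1 d a b z0 (mkY d a b z0 W0 W1) := by
  intro j
  rw [mkY_succ_succ, ← Matrix.mul_assoc,
    Matrix.mul_nonsing_inv _ ((Matrix.isUnit_iff_isUnit_det _).mp (ha j)), Matrix.one_mul]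
  abel

lemma mkT_solves {n : ℕ} (d a b : ℕ → Mat n) (hb : ∀ j, IsUnit (b j)) (z0 : ℂ) (W0 W1 : Mat n) :
    SolEq2 d a b z0 (mkT d a b z0 W0 W1) := by
  intro j
  rw [mkT_succ_succ, Matrix.mul_assoc,
    Matrix.nonsing_inv_mul _ ((Matrix.isUnit_iff_isUnit_det _).mp (hb j)), Matrix.mul_one]
  abel

lemma isUnit_Aup {n : ℕ} (a : ℕ → Mat n) (ha : ∀ j, IsUnit (a j)) (j : ℕ) :
    IsUnit (Aup a j) := by
  cases j with
  | zero => exact (isUnit_one (M := Mat n)).neg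
  | succ j => exact ha j

variable {n : ℕ}

variable {n : ℕ}

lemma mul_expand1 (z0 : ℂ) (ai al dd Y1 Y2 X1 X2 S1 S2 : Matrix (Fin n) (Fin n) ℂ) :
    (ai * (z0 • Y1 - al * X1 - dd * Y1)) * S1 + (ai * (z0 • Y2 - al * X2 - dd * Y2)) * S2
      = ai * (z0 • (Y1 * S1 + Y2 * S2) - al * (X1 * S1 + X2 * S2) - dd * (Y1 * S1 + Y2 * S2)) := by
  simp only [Matrix.mul_sub, Matrix.sub_mul, Matrix.mul_add, Matrix.add_mul, smul_mul_assoc,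
    Matrix.mul_smul, Matrix.mul_assoc, smul_add]
  abel

lemma mul_expand2 (z0 : ℂ) (bi dd A U1 U2 S1 S2 R1 R2 : Matrix (Fin n) (Fin n) ℂ) :
    U1 * ((z0 • S1 - S1 * dd - R1 * A) * bi) + U2 * ((z0 • S2 - S2 * dd - R2 * A) * bi)
      = (z0 • (U1 * S1 + U2 * S2) - (U1 * S1 + U2 * S2) * dd - (U1 * R1 + U2 * R2) * A) * bi := by
  simp only [Matrix.mul_sub, Matrix.sub_mul, Matrix.mul_add, Matrix.add_mul, smul_mul_assoc,
    Matrix.mul_smul, mul_smul_comm, Matrix.mul_assoc, smul_add]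
  abel

lemma PQ (d a b : ℕ → Mat n) (ha : ∀ j, IsUnit (a j)) (hb : ∀ j, IsUnit (b j)) (z0 : ℂ) :
    ∀ j : ℕ,
      (mkY d a b z0 1 0 j * mkT d a b z0 0 1 j
          + mkY d a b z0 0 1 j * mkT d a b z0 (-1) 0 j = 0) ∧
      (mkY d a b z0 1 0 (j+1) * mkT d a b z0 0 1 j
          + mkY d a b z0 0 1 (j+1) * mkT d a b z0 (-1) 0 j = (Aup a j)⁻¹) := by
  have hAi : ∀ j, (Aup a j)⁻¹ * Aup a j = 1 := fun j =>
    Matrix.nonsing_inv_mul _ ((Matrix.isUnit_iff_isUnit_det _).mp (isUnit_Aup a ha j))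
  have hbinv : ∀ j, b j * (b j)⁻¹ = 1 := fun j =>
    Matrix.mul_nonsing_inv _ ((Matrix.isUnit_iff_isUnit_det _).mp (hb j))
  set Y1 := mkY d a b z0 1 0 with hY1
  set Y2 := mkY d a b z0 0 1 with hY2
  set T1 := mkT d a b z0 0 1 with hT1
  set T2 := mkT d a b z0 (-1) 0 with hT2
  have base0 : (Y1 0 * T1 0 + Y2 0 * T2 0 = 0) ∧
      (Y1 1 * T1 0 + Y2 1 * T2 0 = (Aup a 0)⁻¹) := by
    have h0 : (Aup a (0:ℕ) : Mat n)⁻¹ = (-1 : Mat n) := by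
      show ((-1 : Mat n))⁻¹ = -1
      exact Matrix.inv_eq_right_inv (by simp)
    refine ⟨?_, ?_⟩
    · show (1 : Mat n) * 0 + 0 * (-1) = 0
      simp
    · rw [h0]
      show (0 : Mat n) * 0 + 1 * (-1) = -1
      simp
  have base1 : (Y1 1 * T1 1 + Y2 1 * T2 1 = 0) ∧
      (Y1 2 * T1 1 + Y2 2 * T2 1 = (Aup a 1)⁻¹) := by
    refine ⟨?_, ?_⟩
    · show (0 : Mat n) * 1 + 1 * 0 = 0
      simp
    · have e1 : Y1 2 = (a 0)⁻¹ := by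
        rw [hY1, mkY_succ_succ]
        show (a 0)⁻¹ * (z0 • 0 - (-1) * 1 - d 0 * 0) = (a 0)⁻¹
        simp
      show Y1 2 * 1 + Y2 2 * 0 = (Aup a 1)⁻¹
      rw [e1]
      show (a 0)⁻¹ * 1 + Y2 2 * 0 = (a 0)⁻¹
      simp
  -- strong two-step induction
  have main : ∀ j : ℕ,
      ((Y1 j * T1 j + Y2 j * T2 j = 0) ∧
        (Y1 (j+1) * T1 j + Y2 (j+1) * T2 j = (Aup a j)⁻¹)) ∧
      ((Y1 (j+1) * T1 (j+1) + Y2 (j+1) * T2 (j+1) = 0) ∧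
        (Y1 (j+2) * T1 (j+1) + Y2 (j+2) * T2 (j+1) = (Aup a (j+1))⁻¹)) := by
    intro j
    induction j with
    | zero => exact ⟨base0, base1⟩
    | succ j ih =>
      obtain ⟨⟨p0, q0⟩, ⟨p1, q1⟩⟩ := ih
      refine ⟨⟨p1, q1⟩, ?_, ?_⟩
      · -- P (j+2)
        have q1' : Y1 (j+2) * T1 (j+1) + Y2 (j+2) * T2 (j+1) = (a j)⁻¹ := by
          rw [q1]; rfl
        have E1 : Y1 (j+2) * T1 j + Y2 (j+2) * T2 j
            = (a j)⁻¹ * (z0 • (Aup a j)⁻¹ - d j * (Aup a j)⁻¹) := by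
          rw [hY1, hY2, mkY_succ_succ, mkY_succ_succ, ← hY1, ← hY2, mul_expand1, q0, p0]
          simp
        rw [hT1, hT2, mkT_succ_succ, mkT_succ_succ, ← hT1, ← hT2, mul_expand2, q1', E1]
        have : ((a j)⁻¹ * (z0 • (Aup a j)⁻¹ - d j * (Aup a j)⁻¹)) * Aup a j
            = z0 • (a j)⁻¹ - (a j)⁻¹ * d j := by
          rw [Matrix.mul_assoc, Matrix.sub_mul, smul_mul_assoc, hAi, Matrix.mul_assoc, hAi,
            Matrix.mul_one, Matrix.mul_sub, mul_smul_comm, Matrix.mul_one]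
        rw [this]
        simp
      · -- Q (j+2)
        have E2 : Y1 (j+1) * T1 (j+2) + Y2 (j+1) * T2 (j+2) = -(b j)⁻¹ := by
          rw [hT1, hT2, mkT_succ_succ, mkT_succ_succ, ← hT1, ← hT2, mul_expand2, p1, q0]
          simp [hAi]
        have P2 : Y1 (j+2) * T1 (j+2) + Y2 (j+2) * T2 (j+2) = 0 := by
          have q1' : Y1 (j+2) * T1 (j+1) + Y2 (j+2) * T2 (j+1) = (a j)⁻¹ := by
            rw [q1]; rfl
          have E1 : Y1 (j+2) * T1 j + Y2 (j+2) * T2 j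
              = (a j)⁻¹ * (z0 • (Aup a j)⁻¹ - d j * (Aup a j)⁻¹) := by
            rw [hY1, hY2, mkY_succ_succ, mkY_succ_succ, ← hY1, ← hY2, mul_expand1, q0, p0]
            simp
          rw [hT1, hT2, mkT_succ_succ, mkT_succ_succ, ← hT1, ← hT2, mul_expand2, q1', E1]
          have : ((a j)⁻¹ * (z0 • (Aup a j)⁻¹ - d j * (Aup a j)⁻¹)) * Aup a j
              = z0 • (a j)⁻¹ - (a j)⁻¹ * d j := by
            rw [Matrix.mul_assoc, Matrix.sub_mul, smul_mul_assoc, hAi, Matrix.mul_assoc, hAi,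
              Matrix.mul_one, Matrix.mul_sub, mul_smul_comm, Matrix.mul_one]
          rw [this]
          simp
        have e3 : Y1 (j+1+2) * T1 (j+2) + Y2 (j+1+2) * T2 (j+2) = (a (j+1))⁻¹ := by
          rw [hY1, hY2, mkY_succ_succ d a b z0 1 0 (j+1), mkY_succ_succ d a b z0 0 1 (j+1),
            ← hY1, ← hY2, mul_expand1, P2, E2]
          have hal : Alo b (j+1) = b j := rfl
          rw [hal]
          simp [hbinv]
        rw [show ((j:ℕ)+1+1+1) = j+1+2 from rfl, e3]
        rfl
  intro j
  exact (main j).1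

noncomputable def alpha (d a b : ℕ → Mat n) (z0 z : ℂ) (u : ℕ → Fin n → ℂ) (j : ℕ) :
    Fin n → ℂ :=
  u 0 + (z - z0) • ∑ k ∈ Finset.range j, mkT d a b z0 0 1 (k+1) *ᵥ u (k+1)

noncomputable def beta (d a b : ℕ → Mat n) (z0 z : ℂ) (u : ℕ → Fin n → ℂ) (j : ℕ) :
    Fin n → ℂ :=
  u 1 + (z - z0) • ∑ k ∈ Finset.range j, mkT d a b z0 (-1) 0 (k+1) *ᵥ u (k+1)

lemma mulVec_expand1 (z0 : ℂ) (ai al dd Y1 Y2 X1 X2 : Mat n) (s1 s2 : Fin n → ℂ) :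
    (ai * (z0 • Y1 - al * X1 - dd * Y1)) *ᵥ s1 + (ai * (z0 • Y2 - al * X2 - dd * Y2)) *ᵥ s2
      = ai *ᵥ (z0 • (Y1 *ᵥ s1 + Y2 *ᵥ s2) - al *ᵥ (X1 *ᵥ s1 + X2 *ᵥ s2)
          - dd *ᵥ (Y1 *ᵥ s1 + Y2 *ᵥ s2)) := by
  simp only [← Matrix.mulVec_mulVec, Matrix.sub_mulVec, Matrix.smul_mulVec,
    Matrix.mulVec_sub, Matrix.mulVec_add, Matrix.mulVec_smul, smul_add]
  abel

lemma vop (d a b : ℕ → Mat n) (ha : ∀ j, IsUnit (a j)) (hb : ∀ j, IsUnit (b j)) (z0 z : ℂ)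
    (u : ℕ → Fin n → ℂ) (hu : SolEq1v d a b z u) :
    ∀ j : ℕ,
      (u j = mkY d a b z0 1 0 j *ᵥ alpha d a b z0 z u j
          + mkY d a b z0 0 1 j *ᵥ beta d a b z0 z u j) ∧
      (u (j+1) = mkY d a b z0 1 0 (j+1) *ᵥ alpha d a b z0 z u j
          + mkY d a b z0 0 1 (j+1) *ᵥ beta d a b z0 z u j) := by
  have hai : ∀ j, (a j)⁻¹ * a j = 1 := fun j =>
    Matrix.nonsing_inv_mul _ ((Matrix.isUnit_iff_isUnit_det _).mp (ha j))
  set Y1 := mkY d a b z0 1 0 with hY1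
  set Y2 := mkY d a b z0 0 1 with hY2
  set T1 := mkT d a b z0 0 1 with hT1
  set T2 := mkT d a b z0 (-1) 0 with hT2
  set α := alpha d a b z0 z u with hα'
  set β := beta d a b z0 z u with hβ'
  have hα : ∀ j, α (j+1) = α j + (z - z0) • (T1 (j+1) *ᵥ u (j+1)) := by
    intro j
    rw [hα']
    simp only [alpha, Finset.sum_range_succ, smul_add, ← hT1]
    abel
  have hβ : ∀ j, β (j+1) = β j + (z - z0) • (T2 (j+1) *ᵥ u (j+1)) := by
    intro j
    rw [hβ']
    simp only [beta, Finset.sum_range_succ, smul_add, ← hT2]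
    abel
  intro j
  induction j with
  | zero =>
    constructor
    · show u 0 = (1 : Mat n) *ᵥ α 0 + (0 : Mat n) *ᵥ β 0
      have : α 0 = u 0 := by rw [hα']; simp [alpha]
      rw [this, Matrix.one_mulVec, Matrix.zero_mulVec, add_zero]
    · show u 1 = (0 : Mat n) *ᵥ α 0 + (1 : Mat n) *ᵥ β 0
      have : β 0 = u 1 := by rw [hβ']; simp [beta]
      rw [this, Matrix.one_mulVec, Matrix.zero_mulVec, zero_add]
  | succ j ih =>
    obtain ⟨ih1, ih2⟩ := ih
    have pq1 := (PQ d a b ha hb z0 (j+1)).1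
    have pq2 := (PQ d a b ha hb z0 (j+1)).2
    rw [← hY1, ← hY2, ← hT1, ← hT2] at pq1 pq2
    have pq2' : Y1 (j+2) * T1 (j+1) + Y2 (j+2) * T2 (j+1) = (a j)⁻¹ := by rw [pq2]; rfl
    have hG : Y1 (j+2) *ᵥ α j + Y2 (j+2) *ᵥ β j
        = u (j+2) - (z - z0) • ((a j)⁻¹ *ᵥ u (j+1)) := by
      rw [hY1, hY2, mkY_succ_succ, mkY_succ_succ, ← hY1, ← hY2, mulVec_expand1,
        ← ih1, ← ih2]
      have h' : a j *ᵥ u (j+2)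
          = z • u (j+1) - Alo b j *ᵥ u j - d j *ᵥ u (j+1) := by
        rw [← hu j]; abel
      have h2 : z0 • u (j+1) - Alo b j *ᵥ u j - d j *ᵥ u (j+1)
          = a j *ᵥ u (j+2) - (z - z0) • u (j+1) := by
        rw [h', sub_smul]; abel
      rw [h2, Matrix.mulVec_sub, Matrix.mulVec_mulVec, hai, Matrix.one_mulVec,
        Matrix.mulVec_smul]
    have comb1 : Y1 (j+1) *ᵥ α (j+1) + Y2 (j+1) *ᵥ β (j+1)
        = (Y1 (j+1) *ᵥ α j + Y2 (j+1) *ᵥ β j)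
          + (z - z0) • ((Y1 (j+1) * T1 (j+1) + Y2 (j+1) * T2 (j+1)) *ᵥ u (j+1)) := by
      rw [hα, hβ, Matrix.mulVec_add, Matrix.mulVec_add, Matrix.mulVec_smul,
        Matrix.mulVec_smul, Matrix.mulVec_mulVec, Matrix.mulVec_mulVec,
        Matrix.add_mulVec, smul_add]
      abel
    have comb2 : Y1 (j+2) *ᵥ α (j+1) + Y2 (j+2) *ᵥ β (j+1)
        = (Y1 (j+2) *ᵥ α j + Y2 (j+2) *ᵥ β j)
          + (z - z0) • ((Y1 (j+2) * T1 (j+1) + Y2 (j+2) * T2 (j+1)) *ᵥ u (j+1)) := by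
      rw [hα, hβ, Matrix.mulVec_add, Matrix.mulVec_add, Matrix.mulVec_smul,
        Matrix.mulVec_smul, Matrix.mulVec_mulVec, Matrix.mulVec_mulVec,
        Matrix.add_mulVec, smul_add]
      abel
    constructor
    · rw [comb1, pq1, Matrix.zero_mulVec, smul_zero, add_zero, ← ih2]
    · rw [comb2, pq2', hG]
      abel

/-! ### analytic helpers -/

lemma summable_rpow_add {f g : ℕ → ℝ} (hf0 : ∀ j, 0 ≤ f j) (hg0 : ∀ j, 0 ≤ g j) {p : ℝ}
    (hp : 1 ≤ p) (hf : Summable fun j => f j ^ p) (hg : Summable fun j => g j ^ p) :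
    Summable fun j => (f j + g j) ^ p := by
  have hp0 : 0 ≤ p := by linarith
  refine Summable.of_nonneg_of_le (fun j => Real.rpow_nonneg (add_nonneg (hf0 j) (hg0 j)) p)
    (fun j => ?_) (((hf.add hg)).mul_left (2 ^ p))
  have h1 : f j + g j ≤ 2 * max (f j) (g j) := by
    rcases max_cases (f j) (g j) with ⟨he, hl⟩ | ⟨he, hl⟩ <;> rw [he] <;> linarith
  calc (f j + g j) ^ p ≤ (2 * max (f j) (g j)) ^ p :=
        Real.rpow_le_rpow (add_nonneg (hf0 j) (hg0 j)) h1 hp0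
    _ = 2 ^ p * max (f j) (g j) ^ p := by
        rw [Real.mul_rpow (by norm_num) (le_max_of_le_left (hf0 j))]
    _ ≤ 2 ^ p * (f j ^ p + g j ^ p) := by
        apply mul_le_mul_of_nonneg_left _ (by positivity)
        rcases max_cases (f j) (g j) with ⟨he, _⟩ | ⟨he, _⟩ <;> rw [he]
        · nlinarith [Real.rpow_nonneg (hg0 j) p]
        · nlinarith [Real.rpow_nonneg (hf0 j) p]

lemma summable_rpow_sum {ι : Type*} [Fintype ι] (f : ι → ℕ → ℝ) (h0 : ∀ i j, 0 ≤ f i j)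
    {p : ℝ} (hp : 1 ≤ p) (hs : ∀ i, Summable fun j => f i j ^ p) :
    Summable fun j => (∑ i, f i j) ^ p := by
  classical
  have : ∀ s : Finset ι, Summable fun j => (∑ i ∈ s, f i j) ^ p := by
    intro s
    induction s using Finset.cons_induction with
    | empty =>
      have : (fun j : ℕ => ((0:ℝ)) ^ p) = fun _ => (0:ℝ) := by
        funext j; exact Real.zero_rpow (by linarith)
      simpa [this] using (summable_zero : Summable fun _ : ℕ => (0:ℝ))
    | cons i s his ih =>
      simp only [Finset.sum_cons]
      exact summable_rpow_add (h0 i) (fun j => Finset.sum_nonneg fun i _ => h0 i j) hp (hs i) ih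
  exact this Finset.univ

lemma summable_sq_of_rpow {f : ℕ → ℝ} (h0 : ∀ j, 0 ≤ f j) {p : ℝ} (hp1 : 1 ≤ p) (hp2 : p ≤ 2)
    (hs : Summable fun j => f j ^ p) : Summable fun j => f j ^ 2 := by
  have ht : Filter.Tendsto (fun j => f j ^ p) atTop (nhds 0) := hs.tendsto_atTop_zero
  have hev : ∀ᶠ j in atTop, f j ^ p < 1 := ht.eventually (gt_mem_nhds (by norm_num))
  obtain ⟨N, hN⟩ := Filter.eventually_atTop.mp hev
  rw [← summable_nat_add_iff N]
  refine Summable.of_nonneg_of_le (fun j => by positivity) (fun j => ?_)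
    ((summable_nat_add_iff N).mpr hs)
  have hNj : f (j + N) ^ p < 1 := hN (j + N) (Nat.le_add_left N j)
  rcases eq_or_lt_of_le (h0 (j + N)) with h | h
  · rw [← h]
    simp [Real.zero_rpow (by linarith : p ≠ 0)]
  · have hle1 : f (j + N) ≤ 1 := by
      by_contra hc
      push_neg at hc
      have := (Real.one_lt_rpow_iff_of_pos h (y := p)).mpr (Or.inl ⟨hc, by linarith⟩)
      linarith
    calc f (j + N) ^ (2:ℕ) = f (j + N) ^ ((2:ℕ):ℝ) := (Real.rpow_natCast _ 2).symm
      _ ≤ f (j + N) ^ p := Real.rpow_le_rpow_of_exponent_ge h hle1 (by exact_mod_cast hp2)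

lemma summable_mul_of_sq {f g : ℕ → ℝ} (hf0 : ∀ j, 0 ≤ f j) (hg0 : ∀ j, 0 ≤ g j)
    (hf : Summable fun j => f j ^ 2) (hg : Summable fun j => g j ^ 2) :
    Summable fun j => f j * g j := by
  refine Summable.of_nonneg_of_le (fun j => mul_nonneg (hf0 j) (hg0 j)) (fun j => ?_)
    ((hf.add hg).mul_left (1/2))
  have := sq_nonneg (f j - g j)
  nlinarith

/-! ### matrix norm helpers -/

noncomputable def entSum (M : Mat n) : ℝ := ∑ r, ∑ c, ‖M r c‖

lemma entSum_nonneg (M : Mat n) : 0 ≤ entSum M :=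
  Finset.sum_nonneg fun r _ => Finset.sum_nonneg fun c _ => norm_nonneg _

lemma entSum_eq_prod (M : Mat n) : entSum M = ∑ rc : Fin n × Fin n, ‖M rc.1 rc.2‖ :=
  (Fintype.sum_prod_type (f := fun rc : Fin n × Fin n => ‖M rc.1 rc.2‖)).symm

lemma norm_mulVec_le (M : Mat n) (x : Fin n → ℂ) : ‖M *ᵥ x‖ ≤ entSum M * ‖x‖ := by
  refine (pi_norm_le_iff_of_nonneg (mul_nonneg (entSum_nonneg M) (norm_nonneg x))).mpr
    fun i => ?_
  show ‖∑ c, M i c * x c‖ ≤ entSum M * ‖x‖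
  calc ‖∑ c, M i c * x c‖ ≤ ∑ c, ‖M i c * x c‖ := norm_sum_le _ _
    _ = ∑ c, ‖M i c‖ * ‖x c‖ := by simp [norm_mul]
    _ ≤ ∑ c, ‖M i c‖ * ‖x‖ := Finset.sum_le_sum fun c _ =>
        mul_le_mul_of_nonneg_left (norm_le_pi_norm x c) (norm_nonneg _)
    _ = (∑ c, ‖M i c‖) * ‖x‖ := (Finset.sum_mul _ _ _).symm
    _ ≤ entSum M * ‖x‖ := by
        apply mul_le_mul_of_nonneg_right _ (norm_nonneg x)
        exact Finset.single_le_sum (f := fun r => ∑ c, ‖M r c‖)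
          (fun r _ => Finset.sum_nonneg fun c _ => norm_nonneg _) (Finset.mem_univ i)

lemma col_solves {d a b : ℕ → Mat n} {z0 : ℂ} {Y : ℕ → Mat n} (hY : SolEq1 d a b z0 Y)
    (c : Fin n) : SolEq1v d a b z0 (fun j i => Y j i c) := by
  intro j
  funext i
  have h := congrFun (congrFun (hY j) i) c
  simp only [Matrix.add_apply, Matrix.mul_apply, Matrix.smul_apply, smul_eq_mul] at h
  simpa [Matrix.mulVec, dotProduct] using h

lemma row_solves {d a b : ℕ → Mat n} {z0 : ℂ} {T : ℕ → Mat n} (hT : SolEq2 d a b z0 T)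
    (r : Fin n) : SolEq2v d a b z0 (fun j c => star (T j r c)) := by
  intro j
  funext cc
  have h := congrFun (congrFun (hT j) r) cc
  simp only [Matrix.add_apply, Matrix.mul_apply, Matrix.smul_apply, smul_eq_mul] at h
  simpa [Matrix.vecMul, dotProduct, star_star] using h

set_option maxHeartbeats 2000000 in
lemma key (d a b : ℕ → Mat n) (ha : ∀ j, IsUnit (a j)) (hb : ∀ j, IsUnit (b j))
    {p : ℝ} (hp1 : 1 ≤ p) (hp2 : p ≤ 2) (z0 : ℂ)
    (h1 : ∀ u : ℕ → Fin n → ℂ, SolEq1v d a b z0 u → Summable (fun j : ℕ => ‖u j‖ ^ p))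
    (h2 : ∀ v : ℕ → Fin n → ℂ, SolEq2v d a b z0 v → Summable (fun j : ℕ => ‖v j‖ ^ p))
    (z : ℂ) (u : ℕ → Fin n → ℂ) (hu : SolEq1v d a b z u) :
    Summable (fun j : ℕ => ‖u j‖ ^ p) := by
  classical
  have hp0 : 0 ≤ p := by linarith
  have hvop := vop d a b ha hb z0 z u hu
  -- the fixed sequences
  set φ : ℕ → ℝ := fun j => entSum (mkY d a b z0 1 0 j) + entSum (mkY d a b z0 0 1 j) with hφdef
  set ψ : ℕ → ℝ := fun j => entSum (mkT d a b z0 0 1 j) + entSum (mkT d a b z0 (-1) 0 j) with hψdef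
  have hφ0 : ∀ j, 0 ≤ φ j := fun j => add_nonneg (entSum_nonneg _) (entSum_nonneg _)
  have hψ0 : ∀ j, 0 ≤ ψ j := fun j => add_nonneg (entSum_nonneg _) (entSum_nonneg _)
  have hYent : ∀ W0 W1 : Mat n, Summable fun j => entSum (mkY d a b z0 W0 W1 j) ^ p := by
    intro W0 W1
    have hcol := mkY_solves d a b ha z0 W0 W1
    have hsum : Summable fun j =>
        (∑ rc : Fin n × Fin n, ‖mkY d a b z0 W0 W1 j rc.1 rc.2‖) ^ p := by
      apply summable_rpow_sum _ (fun _ _ => norm_nonneg _) hp1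
      intro rc
      have hsol := h1 _ (col_solves hcol rc.2)
      refine Summable.of_nonneg_of_le (fun j => Real.rpow_nonneg (norm_nonneg _) p)
        (fun j => Real.rpow_le_rpow (norm_nonneg _) ?_ hp0) hsol
      exact norm_le_pi_norm (fun i => mkY d a b z0 W0 W1 j i rc.2) rc.1
    simpa only [← entSum_eq_prod] using hsum
  have hTent : ∀ W0 W1 : Mat n, Summable fun j => entSum (mkT d a b z0 W0 W1 j) ^ p := by
    intro W0 W1
    have hrow := mkT_solves d a b hb z0 W0 W1
    have hsum : Summable fun j =>
        (∑ rc : Fin n × Fin n, ‖mkT d a b z0 W0 W1 j rc.1 rc.2‖) ^ p := by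
      apply summable_rpow_sum _ (fun _ _ => norm_nonneg _) hp1
      intro rc
      have hsol := h2 _ (row_solves hrow rc.1)
      refine Summable.of_nonneg_of_le (fun j => Real.rpow_nonneg (norm_nonneg _) p)
        (fun j => Real.rpow_le_rpow (norm_nonneg _) ?_ hp0) hsol
      have := norm_le_pi_norm (fun c => star (mkT d a b z0 W0 W1 j rc.1 c)) rc.2
      simpa [norm_star] using this
    simpa only [← entSum_eq_prod] using hsum
  have hφp : Summable fun j => φ j ^ p :=
    summable_rpow_add (fun _ => entSum_nonneg _) (fun _ => entSum_nonneg _) hp1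
      (hYent 1 0) (hYent 0 1)
  have hψp : Summable fun j => ψ j ^ p :=
    summable_rpow_add (fun _ => entSum_nonneg _) (fun _ => entSum_nonneg _) hp1
      (hTent 0 1) (hTent (-1) 0)
  have hφ2 : Summable fun j => φ j ^ 2 := summable_sq_of_rpow hφ0 hp1 hp2 hφp
  have hψ2 : Summable fun j => ψ j ^ 2 := summable_sq_of_rpow hψ0 hp1 hp2 hψp
  set K := ‖z - z0‖ with hKdef
  have hK0 : 0 ≤ K := norm_nonneg _
  set c1 := ‖u 0‖ + ‖u 1‖ with hc1def
  have hc10 : 0 ≤ c1 := add_nonneg (norm_nonneg _) (norm_nonneg _)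
  -- pointwise bound
  have hbd : ∀ j, ‖u j‖ ≤ φ j * (c1 + K * ∑ k ∈ Finset.range (j+1), ψ k * ‖u k‖) := by
    intro j
    obtain ⟨e1, _⟩ := hvop j
    set D := c1 + K * ∑ k ∈ Finset.range (j+1), ψ k * ‖u k‖ with hDdef
    have hcore : ∀ (T' : ℕ → Mat n) (w0 : Fin n → ℂ),
        (∀ k, entSum (T' k) ≤ ψ k) → ‖w0‖ ≤ c1 →
        ‖w0 + (z - z0) • ∑ k ∈ Finset.range j, T' (k+1) *ᵥ u (k+1)‖ ≤ D := by
      intro T' w0 hT' hw0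
      have step1 : ‖∑ k ∈ Finset.range j, T' (k+1) *ᵥ u (k+1)‖
          ≤ ∑ k ∈ Finset.range j, ψ (k+1) * ‖u (k+1)‖ := by
        refine le_trans (norm_sum_le _ _) (Finset.sum_le_sum fun k _ => ?_)
        exact le_trans (norm_mulVec_le _ _)
          (mul_le_mul_of_nonneg_right (hT' (k+1)) (norm_nonneg _))
      have step2 : ∑ k ∈ Finset.range j, ψ (k+1) * ‖u (k+1)‖
          ≤ ∑ k ∈ Finset.range (j+1), ψ k * ‖u k‖ := by
        rw [Finset.sum_range_succ']
        exact le_add_of_nonneg_right (mul_nonneg (hψ0 0) (norm_nonneg _))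
      calc ‖w0 + (z - z0) • ∑ k ∈ Finset.range j, T' (k+1) *ᵥ u (k+1)‖
          ≤ ‖w0‖ + K * ‖∑ k ∈ Finset.range j, T' (k+1) *ᵥ u (k+1)‖ := by
            refine le_trans (norm_add_le _ _) ?_
            rw [norm_smul]
        _ ≤ D := by
            rw [hDdef]
            have := le_trans step1 step2
            have h3 : K * ‖∑ k ∈ Finset.range j, T' (k+1) *ᵥ u (k+1)‖
                ≤ K * ∑ k ∈ Finset.range (j+1), ψ k * ‖u k‖ :=
              mul_le_mul_of_nonneg_left this hK0
            linarith
    have hαb : ‖alpha d a b z0 z u j‖ ≤ D := by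
      rw [alpha]
      exact hcore (mkT d a b z0 0 1) (u 0)
        (fun k => le_add_of_nonneg_right (entSum_nonneg _)) (le_add_of_nonneg_right (norm_nonneg _))
    have hβb : ‖beta d a b z0 z u j‖ ≤ D := by
      rw [beta]
      exact hcore (mkT d a b z0 (-1) 0) (u 1)
        (fun k => le_add_of_nonneg_left (entSum_nonneg _)) (le_add_of_nonneg_left (norm_nonneg _))
    have hD0 : 0 ≤ D := le_trans (norm_nonneg _) hαb
    rw [e1]
    calc ‖mkY d a b z0 1 0 j *ᵥ alpha d a b z0 z u j
          + mkY d a b z0 0 1 j *ᵥ beta d a b z0 z u j‖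
        ≤ entSum (mkY d a b z0 1 0 j) * ‖alpha d a b z0 z u j‖
          + entSum (mkY d a b z0 0 1 j) * ‖beta d a b z0 z u j‖ :=
          le_trans (norm_add_le _ _) (add_le_add (norm_mulVec_le _ _) (norm_mulVec_le _ _))
      _ ≤ entSum (mkY d a b z0 1 0 j) * D + entSum (mkY d a b z0 0 1 j) * D :=
          add_le_add (mul_le_mul_of_nonneg_left hαb (entSum_nonneg _))
            (mul_le_mul_of_nonneg_left hβb (entSum_nonneg _))
      _ = φ j * D := by rw [hφdef]; ring
  -- choice of N
  have htφ : Filter.Tendsto (fun N => ∑' k, φ (k + N) ^ 2) atTop (nhds 0) := by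
    simpa using tendsto_sum_nat_add (fun m => φ m ^ 2)
  have htψ : Filter.Tendsto (fun N => ∑' k, ψ (k + N) ^ 2) atTop (nhds 0) := by
    simpa using tendsto_sum_nat_add (fun m => ψ m ^ 2)
  have hprod : Filter.Tendsto
      (fun N => K^2 * ((∑' k, φ (k + N) ^ 2) * (∑' k, ψ (k + N) ^ 2))) atTop (nhds 0) := by
    have := (htφ.mul htψ).const_mul (K^2)
    simpa using this
  obtain ⟨N, hN⟩ := Filter.eventually_atTop.mp (hprod.eventually (gt_mem_nhds (by norm_num :
    (0:ℝ) < 1/4)))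
  set Tφ := ∑' k, φ (k + N) ^ 2 with hTφdef
  set Tψ := ∑' k, ψ (k + N) ^ 2 with hTψdef
  have hsφ : Summable fun k => φ (k + N) ^ 2 := (summable_nat_add_iff N).mpr hφ2
  have hsψ : Summable fun k => ψ (k + N) ^ 2 := (summable_nat_add_iff N).mpr hψ2
  have hTφ0 : 0 ≤ Tφ := tsum_nonneg fun k => sq_nonneg _
  have hTψ0 : 0 ≤ Tψ := tsum_nonneg fun k => sq_nonneg _
  have hKsm : K^2 * (Tφ * Tψ) < 1/4 := hN N le_rfl
  have hφtail : ∀ M, ∑ j ∈ Finset.Ico N M, φ j ^ 2 ≤ Tφ := by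
    intro M
    rw [Finset.sum_Ico_eq_sum_range]
    have : ∑ k ∈ Finset.range (M - N), φ (N + k) ^ 2
        = ∑ k ∈ Finset.range (M - N), φ (k + N) ^ 2 :=
      Finset.sum_congr rfl fun k _ => by rw [Nat.add_comm]
    rw [this]
    exact Summable.sum_le_tsum _ (fun k _ => sq_nonneg _) hsφ
  have hψtail : ∀ M, ∑ j ∈ Finset.Ico N M, ψ j ^ 2 ≤ Tψ := by
    intro M
    rw [Finset.sum_Ico_eq_sum_range]
    have : ∑ k ∈ Finset.range (M - N), ψ (N + k) ^ 2
        = ∑ k ∈ Finset.range (M - N), ψ (k + N) ^ 2 :=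
      Finset.sum_congr rfl fun k _ => by rw [Nat.add_comm]
    rw [this]
    exact Summable.sum_le_tsum _ (fun k _ => sq_nonneg _) hsψ
  set CN := c1 + K * ∑ k ∈ Finset.range N, ψ k * ‖u k‖ with hCNdef
  have hCN0 : 0 ≤ CN := add_nonneg hc10 (mul_nonneg hK0
    (Finset.sum_nonneg fun k _ => mul_nonneg (hψ0 k) (norm_nonneg _)))
  -- stage 1: uniform bound for tail partial sums of ‖u‖²
  have hSS : ∀ M, ∑ j ∈ Finset.Ico N M, ‖u j‖ ^ 2 ≤ 4 * (Tφ * CN^2) := by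
    intro M
    set SS := ∑ j ∈ Finset.Ico N M, ‖u j‖ ^ 2 with hSSdef
    set PM := ∑ k ∈ Finset.Ico N M, ψ k * ‖u k‖ with hPMdef
    have hSS0 : 0 ≤ SS := Finset.sum_nonneg fun j _ => sq_nonneg _
    have hPM0 : 0 ≤ PM := Finset.sum_nonneg fun k _ => mul_nonneg (hψ0 k) (norm_nonneg _)
    have hPM2 : PM ^ 2 ≤ Tψ * SS := by
      calc PM ^ 2 ≤ (∑ k ∈ Finset.Ico N M, ψ k ^ 2) * (∑ k ∈ Finset.Ico N M, ‖u k‖ ^ 2) :=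
            Finset.sum_mul_sq_le_sq_mul_sq _ _ _
        _ ≤ Tψ * SS := mul_le_mul_of_nonneg_right (hψtail M) hSS0
    have hptw : ∀ j ∈ Finset.Ico N M, ‖u j‖ ^ 2 ≤ φ j ^ 2 * (CN + K * PM) ^ 2 := by
      intro j hj
      obtain ⟨hjN, hjM⟩ := Finset.mem_Ico.mp hj
      have hdisj : Disjoint (Finset.range N) (Finset.Ico N M) := by
        rw [Finset.disjoint_left]
        intro x hx hx'
        exact absurd (Finset.mem_Ico.mp hx').1 (not_le.mpr (Finset.mem_range.mp hx))
      have hsub : Finset.range (j+1) ⊆ Finset.range N ∪ Finset.Ico N M := by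
        intro x hx
        have hxj : x < j + 1 := Finset.mem_range.mp hx
        rcases lt_or_ge x N with h | h
        · exact Finset.mem_union_left _ (Finset.mem_range.mpr h)
        · exact Finset.mem_union_right _ (Finset.mem_Ico.mpr ⟨h, by omega⟩)
      have hsplit : ∑ k ∈ Finset.range (j+1), ψ k * ‖u k‖
          ≤ (∑ k ∈ Finset.range N, ψ k * ‖u k‖) + PM := by
        calc ∑ k ∈ Finset.range (j+1), ψ k * ‖u k‖
            ≤ ∑ k ∈ Finset.range N ∪ Finset.Ico N M, ψ k * ‖u k‖ :=
              Finset.sum_le_sum_of_subset_of_nonneg hsub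
                (fun k _ _ => mul_nonneg (hψ0 k) (norm_nonneg _))
          _ = (∑ k ∈ Finset.range N, ψ k * ‖u k‖) + PM := by
              rw [Finset.sum_union hdisj]
      have hub : ‖u j‖ ≤ φ j * (CN + K * PM) := by
        refine le_trans (hbd j) (mul_le_mul_of_nonneg_left ?_ (hφ0 j))
        rw [hCNdef]
        nlinarith [hsplit, hK0]
      calc ‖u j‖ ^ 2 ≤ (φ j * (CN + K * PM)) ^ 2 := by
            have := pow_le_pow_left₀ (norm_nonneg (u j)) hub 2
            exact this
        _ = φ j ^ 2 * (CN + K * PM) ^ 2 := by ring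
    have hs2 : SS ≤ Tφ * (CN + K * PM) ^ 2 := by
      calc SS ≤ ∑ j ∈ Finset.Ico N M, φ j ^ 2 * (CN + K * PM) ^ 2 := Finset.sum_le_sum hptw
        _ = (∑ j ∈ Finset.Ico N M, φ j ^ 2) * (CN + K * PM) ^ 2 := by
            rw [Finset.sum_mul]
        _ ≤ Tφ * (CN + K * PM) ^ 2 :=
            mul_le_mul_of_nonneg_right (hφtail M) (sq_nonneg _)
    have hs3 : (CN + K * PM) ^ 2 ≤ 2 * CN^2 + 2 * (K^2 * PM^2) := by nlinarith [sq_nonneg (CN - K * PM)]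
    have e5 : SS ≤ 2 * Tφ * CN^2 + 2 * ((K^2 * Tφ) * PM^2) := by nlinarith [mul_le_mul_of_nonneg_left hs3 hTφ0]
    have e6 : (K^2 * Tφ) * PM^2 ≤ (K^2 * Tφ) * (Tψ * SS) :=
      mul_le_mul_of_nonneg_left hPM2 (by positivity)
    have e8 : (K^2 * (Tφ * Tψ)) * SS ≤ (1/4) * SS :=
      mul_le_mul_of_nonneg_right (le_of_lt hKsm) hSS0
    nlinarith [e5, e6, e8]
  have hu2 : Summable fun j => ‖u j‖ ^ 2 := by
    apply summable_of_sum_range_le (c := (∑ j ∈ Finset.range N, ‖u j‖ ^ 2) + 4 * (Tφ * CN^2))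
      (fun j => sq_nonneg _)
    intro M
    have h4 : 0 ≤ 4 * (Tφ * CN^2) := by positivity
    rcases le_total M N with h | h
    · have : ∑ j ∈ Finset.range M, ‖u j‖ ^ 2 ≤ ∑ j ∈ Finset.range N, ‖u j‖ ^ 2 :=
        Finset.sum_le_sum_of_subset_of_nonneg (Finset.range_subset_range.mpr h)
          (fun j _ _ => sq_nonneg _)
      linarith
    · have hsplit : ∑ j ∈ Finset.range M, ‖u j‖ ^ 2
          = (∑ j ∈ Finset.range N, ‖u j‖ ^ 2) + ∑ j ∈ Finset.Ico N M, ‖u j‖ ^ 2 := by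
        rw [Finset.range_eq_Ico, Finset.range_eq_Ico]
        exact (Finset.sum_Ico_consecutive _ (Nat.zero_le N) h).symm
      rw [hsplit]
      have := hSS M
      linarith
  -- stage 2
  have hmul : Summable fun k => ψ k * ‖u k‖ :=
    summable_mul_of_sq hψ0 (fun k => norm_nonneg _) hψ2 hu2
  set B := ∑' k, ψ k * ‖u k‖ with hBdef
  have hB0 : 0 ≤ B := tsum_nonneg fun k => mul_nonneg (hψ0 k) (norm_nonneg _)
  have hBb : ∀ j, ∑ k ∈ Finset.range (j+1), ψ k * ‖u k‖ ≤ B := fun j =>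
    Summable.sum_le_tsum _ (fun k _ => mul_nonneg (hψ0 k) (norm_nonneg _)) hmul
  set C2 := c1 + K * B with hC2def
  have hC20 : 0 ≤ C2 := add_nonneg hc10 (mul_nonneg hK0 hB0)
  have hfin : ∀ j, ‖u j‖ ≤ φ j * C2 := by
    intro j
    refine le_trans (hbd j) (mul_le_mul_of_nonneg_left ?_ (hφ0 j))
    have := hBb j
    rw [hC2def]
    nlinarith [hK0]
  refine Summable.of_nonneg_of_le (fun j => Real.rpow_nonneg (norm_nonneg _) p) (fun j => ?_)
    (hφp.mul_right (C2 ^ p))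
  calc ‖u j‖ ^ p ≤ (φ j * C2) ^ p := Real.rpow_le_rpow (norm_nonneg _) (hfin j) hp0
    _ = φ j ^ p * C2 ^ p := Real.mul_rpow (hφ0 j) hC20

lemma Alo_conj (a : ℕ → Mat n) (j : ℕ) :
    Alo (fun k => (a k)ᴴ) j = (Aup a j)ᴴ := by
  cases j <;> simp [Alo, Aup]

lemma dual_iff (d a b : ℕ → Mat n) (z : ℂ) (v : ℕ → Fin n → ℂ) :
    SolEq2v d a b z v ↔
      SolEq1v (fun j => (d j)ᴴ) (fun j => (b j)ᴴ) (fun j => (a j)ᴴ) (star z) v := by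
  constructor
  · intro h j
    have h' := congrArg star (h j)
    simp only [star_add, Matrix.star_vecMul, star_star, star_smul] at h'
    rw [Alo_conj]
    exact h'
  · intro h j
    have h' := congrArg star (h j)
    rw [Alo_conj] at h'
    simp only [star_add, Matrix.star_mulVec, star_smul, star_star,
      Matrix.conjTranspose_conjTranspose] at h'
    exact h'

end St11

open St11

/-- for `1 ≤ p ≤ 2`, if at some `z₀` all solutions of (1v) and all
solutions of (2v) are in `l^p_n`, then this holds for every `z ∈ ℂ`. -/
theorem statement11 {n : ℕ} (hn : 1 ≤ n) (d a b : ℕ → Mat n)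
    (ha : ∀ j, IsUnit (a j)) (hb : ∀ j, IsUnit (b j))
    (p : ℝ) (hp1 : 1 ≤ p) (hp2 : p ≤ 2) (z0 : ℂ)
    (h1 : ∀ u : ℕ → Fin n → ℂ, SolEq1v d a b z0 u → Summable (fun j : ℕ => ‖u j‖ ^ p))
    (h2 : ∀ v : ℕ → Fin n → ℂ, SolEq2v d a b z0 v → Summable (fun j : ℕ => ‖v j‖ ^ p))
    (z : ℂ) :
    (∀ u : ℕ → Fin n → ℂ, SolEq1v d a b z u → Summable (fun j : ℕ => ‖u j‖ ^ p)) ∧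
    (∀ v : ℕ → Fin n → ℂ, SolEq2v d a b z v → Summable (fun j : ℕ => ‖v j‖ ^ p)) := by
  constructor
  · exact fun u hu => key d a b ha hb hp1 hp2 z0 h1 h2 z u hu
  · intro v hv
    set d' : ℕ → Mat n := fun j => (d j)ᴴ with hd'
    set a' : ℕ → Mat n := fun j => (b j)ᴴ with ha'd
    set b' : ℕ → Mat n := fun j => (a j)ᴴ with hb'd
    have ha' : ∀ j, IsUnit (a' j) := fun j => by
      show IsUnit ((b j)ᴴ)
      rw [← Matrix.star_eq_conjTranspose]
      exact isUnit_star.mpr (hb j)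
    have hb' : ∀ j, IsUnit (b' j) := fun j => by
      show IsUnit ((a j)ᴴ)
      rw [← Matrix.star_eq_conjTranspose]
      exact isUnit_star.mpr (ha j)
    have h1' : ∀ u : ℕ → Fin n → ℂ, SolEq1v d' a' b' (star z0) u →
        Summable (fun j : ℕ => ‖u j‖ ^ p) :=
      fun u hu => h2 u ((dual_iff d a b z0 u).mpr hu)
    have h2' : ∀ w : ℕ → Fin n → ℂ, SolEq2v d' a' b' (star z0) w →
        Summable (fun j : ℕ => ‖w j‖ ^ p) := by
      intro w hw
      apply h1 w
      have hsol := (dual_iff d' a' b' (star z0) w).mp hw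
      intro j
      have h3 := hsol j
      cases j <;>
        simpa [Alo, hd', ha'd, hb'd, Matrix.conjTranspose_conjTranspose, star_star] using h3
    exact key d' a' b' ha' hb' hp1 hp2 (star z0) h1' h2' (star z) v
      ((dual_iff d a b z v).mp hv)
end

section
/- (Theorem 3.) Assume the symmetry condition (simm) and let 1 ≤ p ≤ 2. If for some z_0 ∈ ℝ every solution of the vector equation (1v) at z_0 belongs to l^p_n, then for every z ∈ ℂ every solution of (1v) at z belongs to l^p_n. -/
open Matrix Filter
open scoped BigOperators ENNReal ComplexOrder

namespace St14
variable {n : ℕ}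

/-- Fundamental matrix solution of equation (1) with prescribed initial data. -/
noncomputable def fund (d a b : ℕ → Mat n) (z : ℂ) (Y0 Y1 : Mat n) : ℕ → Mat n
  | 0 => Y0
  | 1 => Y1
  | (j+2) => (a j)⁻¹ * (z • fund d a b z Y0 Y1 (j+1)
      - d j * fund d a b z Y0 Y1 (j+1) - Alo b j * fund d a b z Y0 Y1 j)

lemma fund_solEq1 (d a b : ℕ → Mat n) (z : ℂ) (Y0 Y1 : Mat n)
    (ha : ∀ j, IsUnit (a j).det) : SolEq1 d a b z (fund d a b z Y0 Y1) := by
  intro j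
  have h2 : fund d a b z Y0 Y1 (j+2) = (a j)⁻¹ * (z • fund d a b z Y0 Y1 (j+1)
      - d j * fund d a b z Y0 Y1 (j+1) - Alo b j * fund d a b z Y0 Y1 j) := rfl
  rw [h2, Matrix.mul_nonsing_inv_cancel_left _ _ (ha j)]
  ring_nf
  abel

/-- Matrix Wronskian. -/
noncomputable def Wm (a b : ℕ → Mat n) (U V : ℕ → Mat n) (j : ℕ) : Mat n :=
  U j * (Aup a j * V (j+1)) - U (j+1) * (Alo b j * V j)

/-- Vector Wronskian. -/
noncomputable def Wv (a b : ℕ → Mat n) (U : ℕ → Mat n) (u : ℕ → Fin n → ℂ) (j : ℕ) :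
    Fin n → ℂ :=
  U j *ᵥ (Aup a j *ᵥ u (j+1)) - U (j+1) *ᵥ (Alo b j *ᵥ u j)

lemma conjTranspose_Alo {a b : ℕ → Mat n} (hba : ∀ j, b j = a j)
    (haH : ∀ j, (a j).IsHermitian) : ∀ j, (Alo b j)ᴴ = Aup a j
  | 0 => by simp [Alo, Aup]
  | j + 1 => by simp [Alo, Aup, hba j, (haH j).eq]

lemma star_sol {d a b : ℕ → Mat n} (hd : ∀ j, (d j).IsHermitian) (hba : ∀ j, b j = a j)
    (haH : ∀ j, (a j).IsHermitian) {z0 : ℝ} {Y : ℕ → Mat n}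
    (hY : SolEq1 d a b (z0 : ℂ) Y) : SolEq2 d a b (z0 : ℂ) (fun j => (Y j)ᴴ) := by
  intro j
  have := congrArg Matrix.conjTranspose (hY j)
  have hA : (a j)ᴴ = b j := by rw [(haH j).eq, hba j]
  simpa [Matrix.conjTranspose_add, Matrix.conjTranspose_mul, Matrix.conjTranspose_smul,
    conjTranspose_Alo hba haH, (hd j).eq, hA, Complex.star_def, Complex.conj_ofReal] using this

lemma Wm_step {d a b : ℕ → Mat n} {w z : ℂ} {U V : ℕ → Mat n}
    (hU : SolEq2 d a b w U) (hV : SolEq1 d a b z V) (j : ℕ) :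
    Wm a b U V (j+1) = Wm a b U V j + (z - w) • (U (j+1) * V (j+1)) := by
  have hV' : a j * V (j+2) = z • V (j+1) - Alo b j * V j - d j * V (j+1) := by
    have := hV j; linear_combination (norm := abel) this
  have hU' : U (j+2) * b j = w • U (j+1) - U j * Aup a j - U (j+1) * d j := by
    have := hU j; linear_combination (norm := abel) this
  show U (j+1) * (a j * V (j+2)) - U (j+2) * (b j * V j.succ) = _
  rw [hV', ← mul_assoc, hU']
  unfold Wm
  simp only [mul_sub, sub_mul, mul_add, add_mul, mul_smul_comm, smul_mul_assoc, smul_sub,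
    sub_smul, mul_assoc]
  abel

lemma Wv_step {d a b : ℕ → Mat n} {w z : ℂ} {U : ℕ → Mat n} {u : ℕ → Fin n → ℂ}
    (hU : SolEq2 d a b w U) (hu : SolEq1v d a b z u) (j : ℕ) :
    Wv a b U u (j+1) = Wv a b U u j + (z - w) • (U (j+1) *ᵥ u (j+1)) := by
  have hu' : a j *ᵥ u (j+2) = z • u (j+1) - Alo b j *ᵥ u j - d j *ᵥ u (j+1) := by
    have := hu j; linear_combination (norm := abel) this
  have hU' : U (j+2) * b j = w • U (j+1) - U j * Aup a j - U (j+1) * d j := by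
    have := hU j; linear_combination (norm := abel) this
  show U (j+1) *ᵥ (a j *ᵥ u (j+2)) - U (j+2) *ᵥ (b j *ᵥ u j.succ) = _
  rw [hu', Matrix.mulVec_mulVec, hU']
  unfold Wv
  simp only [Matrix.mulVec_sub, Matrix.mulVec_smul, Matrix.sub_mulVec, Matrix.smul_mulVec,
    Matrix.mulVec_mulVec, smul_sub, sub_smul, mul_assoc]
  abel

lemma Wm_const {d a b : ℕ → Mat n} {z : ℂ} {U V : ℕ → Mat n}
    (hU : SolEq2 d a b z U) (hV : SolEq1 d a b z V) (j : ℕ) :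
    Wm a b U V j = Wm a b U V 0 := by
  induction j with
  | zero => rfl
  | succ j ih => rw [Wm_step hU hV j, ih]; simp

/-- The key algebraic identities from the four Wronskians. -/
lemma key_identities {a b : ℕ → Mat n} {Y Z : ℕ → Mat n}
    (hYY : ∀ j, Wm a b (fun k => (Y k)ᴴ) Y j = 0)
    (hYZ : ∀ j, Wm a b (fun k => (Y k)ᴴ) Z j = 1)
    (hZY : ∀ j, Wm a b (fun k => (Z k)ᴴ) Y j = -1)
    (hZZ : ∀ j, Wm a b (fun k => (Z k)ᴴ) Z j = 0) (j : ℕ) :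
    (Z (j+1) * ((Y j)ᴴ * Aup a j) - Y (j+1) * ((Z j)ᴴ * Aup a j) = 1) ∧
    (Z (j+1) * ((Y (j+1))ᴴ * Alo b j) - Y (j+1) * ((Z (j+1))ᴴ * Alo b j) = 0) := by
  set M : Matrix (Fin n ⊕ Fin n) (Fin n ⊕ Fin n) ℂ :=
    Matrix.fromBlocks ((Y j)ᴴ * Aup a j) (-((Y (j+1))ᴴ * Alo b j))
      ((Z j)ᴴ * Aup a j) (-((Z (j+1))ᴴ * Alo b j)) with hM
  set N : Matrix (Fin n ⊕ Fin n) (Fin n ⊕ Fin n) ℂ :=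
    Matrix.fromBlocks (Y (j+1)) (Z (j+1)) (Y j) (Z j) with hN
  have hMN : M * N = Matrix.fromBlocks 0 1 (-1) 0 := by
    rw [hM, hN, Matrix.fromBlocks_multiply]
    have e11 : (Y j)ᴴ * Aup a j * Y (j+1) + -((Y (j+1))ᴴ * Alo b j) * Y j = 0 := by
      have := hYY j; unfold Wm at this
      simp only [neg_mul, mul_assoc] at *; linear_combination (norm := abel) this
    have e12 : (Y j)ᴴ * Aup a j * Z (j+1) + -((Y (j+1))ᴴ * Alo b j) * Z j = 1 := by
      have := hYZ j; unfold Wm at this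
      simp only [neg_mul, mul_assoc] at *; linear_combination (norm := abel) this
    have e21 : (Z j)ᴴ * Aup a j * Y (j+1) + -((Z (j+1))ᴴ * Alo b j) * Y j = -1 := by
      have := hZY j; unfold Wm at this
      simp only [neg_mul, mul_assoc] at *; linear_combination (norm := abel) this
    have e22 : (Z j)ᴴ * Aup a j * Z (j+1) + -((Z (j+1))ᴴ * Alo b j) * Z j = 0 := by
      have := hZZ j; unfold Wm at this
      simp only [neg_mul, mul_assoc] at *; linear_combination (norm := abel) this
    rw [e11, e12, e21, e22]
  have hJ : (Matrix.fromBlocks 0 1 (-1) 0 : Matrix (Fin n ⊕ Fin n) (Fin n ⊕ Fin n) ℂ) *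
      Matrix.fromBlocks 0 (-1) 1 0 = 1 := by
    rw [Matrix.fromBlocks_multiply, ← Matrix.fromBlocks_one]
    congr 1 <;> simp
  have hNM : (N * Matrix.fromBlocks 0 (-1) 1 0) * M = 1 := by
    rw [mul_eq_one_comm]
    rw [← mul_assoc, hMN, hJ]
  have hNJ : N * Matrix.fromBlocks 0 (-1) 1 0 =
      Matrix.fromBlocks (Z (j+1)) (-(Y (j+1))) (Z j) (-(Y j)) := by
    rw [hN, Matrix.fromBlocks_multiply]
    congr 1 <;> simp
  rw [hNJ, Matrix.fromBlocks_multiply, ← Matrix.fromBlocks_one] at hNM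
  have h11 := (Matrix.fromBlocks_inj.mp hNM).1
  have h12 := (Matrix.fromBlocks_inj.mp hNM).2.1
  constructor
  · rw [← h11]; simp [sub_eq_add_neg]
  · have h := h12
    simp only [mul_neg, neg_mul, neg_neg] at h
    linear_combination (norm := abel) -h

/-- Sum of absolute values of all entries. -/
noncomputable def fA (A : Mat n) : ℝ := ∑ i, ∑ k, ‖A i k‖

lemma fA_nonneg (A : Mat n) : 0 ≤ fA A :=
  Finset.sum_nonneg fun _ _ => Finset.sum_nonneg fun _ _ => norm_nonneg _

lemma row_le_fA (A : Mat n) (i : Fin n) : ∑ k, ‖A i k‖ ≤ fA A :=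
  Finset.single_le_sum (f := fun i => ∑ k, ‖A i k‖)
    (fun _ _ => Finset.sum_nonneg fun _ _ => norm_nonneg _) (Finset.mem_univ i)

lemma norm_mulVec_le (A : Mat n) (v : Fin n → ℂ) : ‖A *ᵥ v‖ ≤ fA A * ‖v‖ := by
  rw [pi_norm_le_iff_of_nonneg (mul_nonneg (fA_nonneg A) (norm_nonneg v))]
  intro i
  calc ‖(A *ᵥ v) i‖ = ‖∑ k, A i k * v k‖ := by rw [Matrix.mulVec, dotProduct]
    _ ≤ ∑ k, ‖A i k * v k‖ := norm_sum_le _ _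
    _ ≤ ∑ k, ‖A i k‖ * ‖v‖ := by
        refine Finset.sum_le_sum fun k _ => ?_
        rw [norm_mul]
        exact mul_le_mul_of_nonneg_left (norm_le_pi_norm v k) (norm_nonneg _)
    _ = (∑ k, ‖A i k‖) * ‖v‖ := by rw [Finset.sum_mul]
    _ ≤ fA A * ‖v‖ := mul_le_mul_of_nonneg_right (row_le_fA A i) (norm_nonneg v)

lemma fA_conjTranspose (A : Mat n) : fA Aᴴ = fA A := by
  unfold fA
  rw [Finset.sum_comm]
  simp [Matrix.conjTranspose_apply]

lemma fA_le_sum_cols (A : Mat n) : fA A ≤ (n : ℝ) * ∑ k, ‖A *ᵥ Pi.single k 1‖ := by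
  unfold fA
  calc ∑ i, ∑ k, ‖A i k‖ ≤ ∑ _i : Fin n, ∑ k, ‖A *ᵥ Pi.single k 1‖ := by
        refine Finset.sum_le_sum fun i _ => Finset.sum_le_sum fun k _ => ?_
        have h : (A *ᵥ Pi.single k 1) i = A i k := by
          simp [Matrix.mulVec_single]
        rw [← h]
        exact norm_le_pi_norm (A *ᵥ Pi.single k 1) i
    _ = (n : ℝ) * ∑ k, ‖A *ᵥ Pi.single k 1‖ := by
        rw [Finset.sum_const, Finset.card_univ, Fintype.card_fin, nsmul_eq_mul]

/-! rpow summability lemmas -/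

lemma rpow_add_le {x y q : ℝ} (hx : 0 ≤ x) (hy : 0 ≤ y) (hq : 0 ≤ q) :
    (x + y) ^ q ≤ 2 ^ q * (x ^ q + y ^ q) := by
  rcases le_total x y with h | h
  · calc (x + y) ^ q ≤ (2 * y) ^ q := by
          apply Real.rpow_le_rpow (by linarith) (by linarith) hq
      _ = 2 ^ q * y ^ q := Real.mul_rpow (by norm_num) hy
      _ ≤ 2 ^ q * (x ^ q + y ^ q) := by
          have := Real.rpow_nonneg hx q
          have h2 : (0:ℝ) ≤ 2 ^ q := Real.rpow_nonneg (by norm_num) q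
          nlinarith
  · calc (x + y) ^ q ≤ (2 * x) ^ q := by
          apply Real.rpow_le_rpow (by linarith) (by linarith) hq
      _ = 2 ^ q * x ^ q := Real.mul_rpow (by norm_num) hx
      _ ≤ 2 ^ q * (x ^ q + y ^ q) := by
          have := Real.rpow_nonneg hy q
          have h2 : (0:ℝ) ≤ 2 ^ q := Real.rpow_nonneg (by norm_num) q
          nlinarith

lemma summable_rpow_mono {x y : ℕ → ℝ} {q : ℝ} (hq : 0 ≤ q) (hx : ∀ j, 0 ≤ x j)
    (hxy : ∀ j, x j ≤ y j) (hy : Summable fun j => y j ^ q) :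
    Summable fun j => x j ^ q :=
  Summable.of_nonneg_of_le (fun j => Real.rpow_nonneg (hx j) q)
    (fun j => Real.rpow_le_rpow (hx j) (hxy j) hq) hy

lemma summable_rpow_add {x y : ℕ → ℝ} {q : ℝ} (hq : 0 ≤ q) (hx0 : ∀ j, 0 ≤ x j)
    (hy0 : ∀ j, 0 ≤ y j) (hx : Summable fun j => x j ^ q) (hy : Summable fun j => y j ^ q) :
    Summable fun j => (x j + y j) ^ q :=
  Summable.of_nonneg_of_le (fun j => Real.rpow_nonneg (add_nonneg (hx0 j) (hy0 j)) q)
    (fun j => rpow_add_le (hx0 j) (hy0 j) hq) (((hx.add hy).mul_left (2 ^ q)))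

lemma summable_rpow_finsum {m : ℕ} {x : Fin m → ℕ → ℝ} {q : ℝ} (hq : 1 ≤ q)
    (hx0 : ∀ k j, 0 ≤ x k j) (hx : ∀ k, Summable fun j => x k j ^ q) :
    Summable fun j => (∑ k, x k j) ^ q := by
  classical
  induction (Finset.univ : Finset (Fin m)) using Finset.induction_on with
  | empty => simp [Real.zero_rpow (by linarith : q ≠ 0)]
  | @insert a s hnotmem ih =>
      have : (fun j => (∑ k ∈ insert a s, x k j) ^ q)
          = fun j => (x a j + ∑ k ∈ s, x k j) ^ q := by
        funext j; rw [Finset.sum_insert hnotmem]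
      rw [this]
      exact summable_rpow_add (by linarith) (hx0 a)
        (fun j => Finset.sum_nonneg fun k _ => hx0 k j) (hx a) ih

lemma summable_rpow_const_mul {x : ℕ → ℝ} {c q : ℝ} (hc : 0 ≤ c) (hx0 : ∀ j, 0 ≤ x j)
    (hx : Summable fun j => x j ^ q) : Summable fun j => (c * x j) ^ q := by
  have : (fun j => (c * x j) ^ q) = fun j => c ^ q * x j ^ q := by
    funext j; exact Real.mul_rpow hc (hx0 j)
  rw [this]
  exact hx.mul_left _

lemma summable_self_mul_of_summable_rpow {F : ℕ → ℝ} {q : ℝ} (hq1 : 1 ≤ q) (hq2 : q ≤ 2)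
    (hF0 : ∀ j, 0 ≤ F j) (h : Summable fun j => F j ^ q) :
    Summable fun j => F j * F j := by
  have hq0 : (0:ℝ) < q := lt_of_lt_of_le one_pos hq1
  have htend : Tendsto (fun j => F j ^ q) atTop (nhds 0) := h.tendsto_atTop_zero
  have hev : ∀ᶠ j in atTop, F j ^ q ≤ 1 := htend.eventually (ge_mem_nhds one_pos)
  obtain ⟨N, hN⟩ := hev.exists_forall_of_atTop
  have hF1 : ∀ j ≥ N, F j ≤ 1 := by
    intro j hj
    have h1 : (F j ^ q) ^ q⁻¹ = F j := by
      rw [← Real.rpow_mul (hF0 j), mul_inv_cancel₀ hq0.ne', Real.rpow_one]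
    calc F j = (F j ^ q) ^ q⁻¹ := h1.symm
      _ ≤ (1:ℝ) ^ q⁻¹ := Real.rpow_le_rpow (Real.rpow_nonneg (hF0 j) q) (hN j hj)
            (inv_nonneg.mpr hq0.le)
      _ = 1 := Real.one_rpow _
  have key : ∀ j, F (j+N) * F (j+N) ≤ F (j+N) ^ q := by
    intro j
    by_cases h0 : F (j+N) = 0
    · rw [h0, Real.zero_rpow hq0.ne']; norm_num
    · have hpos : 0 < F (j+N) := lt_of_le_of_ne (hF0 _) (Ne.symm h0)
      have h2 : F (j+N) ^ (2:ℝ) = F (j+N) * F (j+N) := by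
        rw [show (2:ℝ) = ((2:ℕ):ℝ) by norm_num, Real.rpow_natCast, pow_two]
      rw [← h2]
      exact Real.rpow_le_rpow_of_exponent_ge hpos (hF1 _ (Nat.le_add_left N j)) hq2
  have hs : Summable fun j => F (j+N) * F (j+N) :=
    Summable.of_nonneg_of_le (fun j => mul_nonneg (hF0 _) (hF0 _)) key
      ((summable_nat_add_iff N).mpr h)
  exact (summable_nat_add_iff N).mp hs

/-- Discrete Gronwall lemma. -/
lemma gronwall {F g : ℕ → ℝ} {c D : ℝ} (hc : 0 ≤ c) (hD : 0 ≤ D)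
    (hF0 : ∀ j, 0 ≤ F j) (hg0 : ∀ j, 0 ≤ g j)
    (hFsq : Summable fun j => F j * F j)
    (hrec : ∀ j, g (j+1) ≤ F (j+1) * (D + c * ∑ k ∈ Finset.range j, F (k+1) * g (k+1))) :
    ∃ K, 0 ≤ K ∧ ∀ j, g (j+1) ≤ K * F (j+1) := by
  set A : ℝ := ∑' j, F (j+1) * F (j+1) with hA
  have hFsq' : Summable fun j => F (j+1) * F (j+1) := (summable_nat_add_iff 1).mpr hFsq
  set T : ℕ → ℝ := fun j => D + c * ∑ k ∈ Finset.range j, F (k+1) * g (k+1) with hT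
  have hT0 : ∀ j, 0 ≤ T j := by
    intro j
    have : 0 ≤ ∑ k ∈ Finset.range j, F (k+1) * g (k+1) :=
      Finset.sum_nonneg fun k _ => mul_nonneg (hF0 _) (hg0 _)
    have := mul_nonneg hc this
    simp only [hT]; linarith
  have hpart : ∀ j, ∑ k ∈ Finset.range j, F (k+1) * F (k+1) ≤ A := by
    intro j
    exact Summable.sum_le_tsum (Finset.range j) (fun k _ => mul_nonneg (hF0 _) (hF0 _)) hFsq'
  have hTind : ∀ j, T j ≤ D * Real.exp (c * ∑ k ∈ Finset.range j, F (k+1) * F (k+1)) := by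
    intro j
    induction j with
    | zero => simp [hT]
    | succ j ih =>
        have hstep : T (j+1) ≤ T j * (1 + c * (F (j+1) * F (j+1))) := by
          have h1 : T (j+1) = T j + c * (F (j+1) * g (j+1)) := by
            simp only [hT, Finset.sum_range_succ]; ring
          have h2 : g (j+1) ≤ F (j+1) * T j := hrec j
          have h3 : F (j+1) * g (j+1) ≤ F (j+1) * (F (j+1) * T j) :=
            mul_le_mul_of_nonneg_left h2 (hF0 _)
          have h4 : c * (F (j+1) * g (j+1)) ≤ c * (F (j+1) * (F (j+1) * T j)) :=
            mul_le_mul_of_nonneg_left h3 hc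
          rw [h1]; nlinarith [hT0 j]
        have hexp : (1 : ℝ) + c * (F (j+1) * F (j+1)) ≤
            Real.exp (c * (F (j+1) * F (j+1))) := by
          have := Real.add_one_le_exp (c * (F (j+1) * F (j+1)))
          linarith
        calc T (j+1) ≤ T j * (1 + c * (F (j+1) * F (j+1))) := hstep
          _ ≤ (D * Real.exp (c * ∑ k ∈ Finset.range j, F (k+1) * F (k+1))) *
              Real.exp (c * (F (j+1) * F (j+1))) := by
              apply mul_le_mul ih hexp
                (by nlinarith [hF0 (j+1), mul_nonneg (hF0 (j+1)) (hF0 (j+1))])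
                (mul_nonneg hD (Real.exp_nonneg _))
          _ = D * Real.exp (c * ∑ k ∈ Finset.range (j+1), F (k+1) * F (k+1)) := by
              rw [mul_assoc, ← Real.exp_add, Finset.sum_range_succ, mul_add]
  refine ⟨D * Real.exp (c * A), by positivity, fun j => ?_⟩
  have hTj : T j ≤ D * Real.exp (c * A) := by
    calc T j ≤ D * Real.exp (c * ∑ k ∈ Finset.range j, F (k+1) * F (k+1)) := hTind j
      _ ≤ D * Real.exp (c * A) := by
          apply mul_le_mul_of_nonneg_left _ hD
          exact Real.exp_le_exp.mpr (mul_le_mul_of_nonneg_left (hpart j) hc)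
  calc g (j+1) ≤ F (j+1) * T j := hrec j
    _ ≤ F (j+1) * (D * Real.exp (c * A)) := mul_le_mul_of_nonneg_left hTj (hF0 _)
    _ = (D * Real.exp (c * A)) * F (j+1) := by ring

end St14

/-- Theorem 3: under (simm), for `1 ≤ p ≤ 2`, if at some real `z₀` all
solutions of (1v) are in `l^p_n`, then this holds for every `z ∈ ℂ`. -/
theorem statement14 {n : ℕ} (hn : 1 ≤ n) (d a b : ℕ → Mat n)
    (hd : ∀ j, (d j).IsHermitian) (hba : ∀ j, b j = a j) (hapos : ∀ j, (a j).PosDef)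
    (p : ℝ) (hp1 : 1 ≤ p) (hp2 : p ≤ 2) (z0 : ℝ)
    (h1 : ∀ u : ℕ → Fin n → ℂ, SolEq1v d a b (z0 : ℂ) u →
      Summable (fun j : ℕ => ‖u j‖ ^ p)) :
    ∀ z : ℂ, ∀ u : ℕ → Fin n → ℂ, SolEq1v d a b z u →
      Summable (fun j : ℕ => ‖u j‖ ^ p) := by
  classical
  intro z u hu
  open St14 in
  have hq0 : (0:ℝ) ≤ p := by linarith
  have haH : ∀ j, (a j).IsHermitian := fun j => (hapos j).1
  have haU : ∀ j, IsUnit (a j).det := fun j => isUnit_iff_ne_zero.mpr (hapos j).det_pos.ne'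
  set Y : ℕ → Mat n := St14.fund d a b (z0:ℂ) 0 1 with hYdef
  set Z : ℕ → Mat n := St14.fund d a b (z0:ℂ) 1 0 with hZdef
  have hY : SolEq1 d a b (z0:ℂ) Y := St14.fund_solEq1 d a b _ 0 1 haU
  have hZ : SolEq1 d a b (z0:ℂ) Z := St14.fund_solEq1 d a b _ 1 0 haU
  have hYs : SolEq2 d a b (z0:ℂ) (fun k => (Y k)ᴴ) := St14.star_sol hd hba haH hY
  have hZs : SolEq2 d a b (z0:ℂ) (fun k => (Z k)ᴴ) := St14.star_sol hd hba haH hZ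
  have hY0 : Y 0 = 0 := rfl
  have hY1 : Y 1 = 1 := rfl
  have hZ0 : Z 0 = 1 := rfl
  have hZ1 : Z 1 = 0 := rfl
  have hYY : ∀ j, St14.Wm a b (fun k => (Y k)ᴴ) Y j = 0 := by
    intro j; rw [St14.Wm_const hYs hY]
    simp [St14.Wm, hY0, hY1, Aup, Alo]
  have hYZ : ∀ j, St14.Wm a b (fun k => (Y k)ᴴ) Z j = 1 := by
    intro j; rw [St14.Wm_const hYs hZ]
    simp [St14.Wm, hY0, hY1, hZ0, hZ1, Aup, Alo]
  have hZY : ∀ j, St14.Wm a b (fun k => (Z k)ᴴ) Y j = -1 := by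
    intro j; rw [St14.Wm_const hZs hY]
    simp [St14.Wm, hY0, hY1, hZ0, hZ1, Aup, Alo]
  have hZZ : ∀ j, St14.Wm a b (fun k => (Z k)ᴴ) Z j = 0 := by
    intro j; rw [St14.Wm_const hZs hZ]
    simp [St14.Wm, hZ0, hZ1, Aup, Alo]
  have key := St14.key_identities hYY hYZ hZY hZZ
  -- the vector Wronskians
  set WY : ℕ → Fin n → ℂ := St14.Wv a b (fun k => (Y k)ᴴ) u with hWYdef
  set WZ : ℕ → Fin n → ℂ := St14.Wv a b (fun k => (Z k)ᴴ) u with hWZdef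
  have hWY : ∀ j, WY j = u 0 + (z - z0) •
      ∑ k ∈ Finset.range j, (Y (k+1))ᴴ *ᵥ u (k+1) := by
    intro j
    induction j with
    | zero =>
        simp only [Finset.range_zero, Finset.sum_empty, smul_zero, add_zero]
        show (Y 0)ᴴ *ᵥ (Aup a 0 *ᵥ u 1) - (Y 1)ᴴ *ᵥ (Alo b 0 *ᵥ u 0) = u 0
        simp [hY0, hY1, Aup, Alo, Matrix.neg_mulVec]
    | succ j ih =>
        rw [show WY (j+1) = WY j + (z - (z0:ℂ)) • ((Y (j+1))ᴴ *ᵥ u (j+1)) from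
          St14.Wv_step hYs hu j, ih, Finset.sum_range_succ, smul_add]
        abel
  have hWZ : ∀ j, WZ j = -(u 1) + (z - z0) •
      ∑ k ∈ Finset.range j, (Z (k+1))ᴴ *ᵥ u (k+1) := by
    intro j
    induction j with
    | zero =>
        simp only [Finset.range_zero, Finset.sum_empty, smul_zero, add_zero]
        show (Z 0)ᴴ *ᵥ (Aup a 0 *ᵥ u 1) - (Z 1)ᴴ *ᵥ (Alo b 0 *ᵥ u 0) = -(u 1)
        simp [hZ0, hZ1, Aup, Alo, Matrix.neg_mulVec]
    | succ j ih =>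
        rw [show WZ (j+1) = WZ j + (z - (z0:ℂ)) • ((Z (j+1))ᴴ *ᵥ u (j+1)) from
          St14.Wv_step hZs hu j, ih, Finset.sum_range_succ, smul_add]
        abel
  -- the representation formula
  have rep : ∀ j, u (j+1) = Z (j+1) *ᵥ WY j - Y (j+1) *ᵥ WZ j := by
    intro j
    have e1 : (Z (j+1) * ((Y j)ᴴ * Aup a j)) *ᵥ u (j+1)
        - (Y (j+1) * ((Z j)ᴴ * Aup a j)) *ᵥ u (j+1) = u (j+1) := by
      rw [← Matrix.sub_mulVec, (key j).1, Matrix.one_mulVec]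
    have e2 : (Z (j+1) * ((Y (j+1))ᴴ * Alo b j)) *ᵥ u j
        - (Y (j+1) * ((Z (j+1))ᴴ * Alo b j)) *ᵥ u j = 0 := by
      rw [← Matrix.sub_mulVec, (key j).2, Matrix.zero_mulVec]
    have expand : Z (j+1) *ᵥ WY j - Y (j+1) *ᵥ WZ j
        = ((Z (j+1) * ((Y j)ᴴ * Aup a j)) *ᵥ u (j+1)
            - (Y (j+1) * ((Z j)ᴴ * Aup a j)) *ᵥ u (j+1))
          - ((Z (j+1) * ((Y (j+1))ᴴ * Alo b j)) *ᵥ u j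
            - (Y (j+1) * ((Z (j+1))ᴴ * Alo b j)) *ᵥ u j) := by
      show Z (j+1) *ᵥ ((Y j)ᴴ *ᵥ (Aup a j *ᵥ u (j+1)) - (Y (j+1))ᴴ *ᵥ (Alo b j *ᵥ u j))
          - Y (j+1) *ᵥ ((Z j)ᴴ *ᵥ (Aup a j *ᵥ u (j+1)) - (Z (j+1))ᴴ *ᵥ (Alo b j *ᵥ u j)) = _
      simp only [Matrix.mulVec_sub, Matrix.mulVec_mulVec, mul_assoc]
      abel
    rw [expand, e1, e2, sub_zero]
  -- norms
  set c : ℝ := ‖z - (z0:ℂ)‖ with hc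
  set F : ℕ → ℝ := fun j => St14.fA (Y j) + St14.fA (Z j) with hF
  set g : ℕ → ℝ := fun j => ‖u j‖ with hg
  have hF0 : ∀ j, 0 ≤ F j := fun j => add_nonneg (St14.fA_nonneg _) (St14.fA_nonneg _)
  have hg0 : ∀ j, 0 ≤ g j := fun j => norm_nonneg _
  have hc0 : 0 ≤ c := norm_nonneg _
  set D : ℝ := ‖u 0‖ + ‖u 1‖ with hD
  have hD0 : 0 ≤ D := add_nonneg (norm_nonneg _) (norm_nonneg _)
  -- the recursive estimate
  have hrec : ∀ j, g (j+1) ≤ F (j+1) *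
      (D + c * ∑ k ∈ Finset.range j, F (k+1) * g (k+1)) := by
    intro j
    set S : ℝ := ∑ k ∈ Finset.range j, F (k+1) * g (k+1) with hS
    have hS0 : 0 ≤ S := Finset.sum_nonneg fun k _ => mul_nonneg (hF0 _) (hg0 _)
    have hsum : ∀ (V : ℕ → Mat n), (∀ k, St14.fA (V k) ≤ F k) →
        ‖∑ k ∈ Finset.range j, (V (k+1))ᴴ *ᵥ u (k+1)‖ ≤ S := by
      intro V hV
      calc ‖∑ k ∈ Finset.range j, (V (k+1))ᴴ *ᵥ u (k+1)‖
          ≤ ∑ k ∈ Finset.range j, ‖(V (k+1))ᴴ *ᵥ u (k+1)‖ := norm_sum_le _ _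
        _ ≤ S := by
            refine Finset.sum_le_sum fun k _ => ?_
            calc ‖(V (k+1))ᴴ *ᵥ u (k+1)‖ ≤ St14.fA ((V (k+1))ᴴ) * ‖u (k+1)‖ :=
                  St14.norm_mulVec_le _ _
              _ = St14.fA (V (k+1)) * g (k+1) := by rw [St14.fA_conjTranspose]
              _ ≤ F (k+1) * g (k+1) :=
                  mul_le_mul_of_nonneg_right (hV (k+1)) (hg0 _)
    have hVY : ∀ k, St14.fA (Y k) ≤ F k := fun k =>
      le_add_of_nonneg_right (St14.fA_nonneg _)
    have hVZ : ∀ k, St14.fA (Z k) ≤ F k := fun k =>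
      le_add_of_nonneg_left (St14.fA_nonneg _)
    have hWYn : ‖WY j‖ ≤ ‖u 0‖ + c * S := by
      rw [hWY j]
      calc ‖u 0 + (z - z0) • ∑ k ∈ Finset.range j, (Y (k+1))ᴴ *ᵥ u (k+1)‖
          ≤ ‖u 0‖ + ‖(z - (z0:ℂ)) • ∑ k ∈ Finset.range j, (Y (k+1))ᴴ *ᵥ u (k+1)‖ :=
            norm_add_le _ _
        _ = ‖u 0‖ + c * ‖∑ k ∈ Finset.range j, (Y (k+1))ᴴ *ᵥ u (k+1)‖ := by
            rw [norm_smul]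
        _ ≤ ‖u 0‖ + c * S := by
            have := hsum Y hVY
            nlinarith
    have hWZn : ‖WZ j‖ ≤ ‖u 1‖ + c * S := by
      rw [hWZ j]
      calc ‖-(u 1) + (z - z0) • ∑ k ∈ Finset.range j, (Z (k+1))ᴴ *ᵥ u (k+1)‖
          ≤ ‖-(u 1)‖ + ‖(z - (z0:ℂ)) • ∑ k ∈ Finset.range j, (Z (k+1))ᴴ *ᵥ u (k+1)‖ :=
            norm_add_le _ _
        _ = ‖u 1‖ + c * ‖∑ k ∈ Finset.range j, (Z (k+1))ᴴ *ᵥ u (k+1)‖ := by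
            rw [norm_smul, norm_neg]
        _ ≤ ‖u 1‖ + c * S := by
            have := hsum Z hVZ
            nlinarith
    have hbound : g (j+1) ≤ St14.fA (Z (j+1)) * ‖WY j‖ + St14.fA (Y (j+1)) * ‖WZ j‖ := by
      calc g (j+1) = ‖Z (j+1) *ᵥ WY j - Y (j+1) *ᵥ WZ j‖ := by
            show ‖u (j+1)‖ = _
            rw [rep j]
        _ ≤ ‖Z (j+1) *ᵥ WY j‖ + ‖Y (j+1) *ᵥ WZ j‖ := norm_sub_le _ _
        _ ≤ St14.fA (Z (j+1)) * ‖WY j‖ + St14.fA (Y (j+1)) * ‖WZ j‖ :=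
            add_le_add (St14.norm_mulVec_le _ _) (St14.norm_mulVec_le _ _)
    have hfy := St14.fA_nonneg (Y (j+1))
    have hfz := St14.fA_nonneg (Z (j+1))
    have hwy := norm_nonneg (WY j)
    have hwz := norm_nonneg (WZ j)
    have hcS : 0 ≤ c * S := mul_nonneg hc0 hS0
    have hu0 := norm_nonneg (u 0)
    have hu1 := norm_nonneg (u 1)
    calc g (j+1) ≤ St14.fA (Z (j+1)) * ‖WY j‖ + St14.fA (Y (j+1)) * ‖WZ j‖ := hbound
      _ ≤ St14.fA (Z (j+1)) * (‖u 0‖ + c * S) + St14.fA (Y (j+1)) * (‖u 1‖ + c * S) := by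
          exact add_le_add (mul_le_mul_of_nonneg_left hWYn hfz)
            (mul_le_mul_of_nonneg_left hWZn hfy)
      _ ≤ F (j+1) * (D + c * S) := by
          simp only [hF, hD]
          nlinarith
  -- summability of F ^ p
  have hcol : ∀ (V : ℕ → Mat n), SolEq1 d a b (z0:ℂ) V →
      Summable fun j => St14.fA (V j) ^ p := by
    intro V hV
    have hsol : ∀ k : Fin n, SolEq1v d a b (z0:ℂ) (fun j => V j *ᵥ Pi.single k 1) := by
      intro k j
      have := congrArg (fun M : Mat n => M *ᵥ Pi.single k 1) (hV j)
      simpa only [Matrix.add_mulVec, Matrix.smul_mulVec, ← Matrix.mulVec_mulVec] using this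
    have hcols : ∀ k : Fin n, Summable fun j => ‖V j *ᵥ Pi.single k 1‖ ^ p :=
      fun k => h1 _ (hsol k)
    refine St14.summable_rpow_mono hq0 (fun j => St14.fA_nonneg _)
      (fun j => St14.fA_le_sum_cols (V j)) ?_
    exact St14.summable_rpow_const_mul (Nat.cast_nonneg n)
      (fun j => Finset.sum_nonneg fun k _ => norm_nonneg _)
      (St14.summable_rpow_finsum hp1 (fun k j => norm_nonneg _) hcols)
  have hFp : Summable fun j => F j ^ p :=
    St14.summable_rpow_add hq0 (fun j => St14.fA_nonneg _) (fun j => St14.fA_nonneg _)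
      (hcol Y hY) (hcol Z hZ)
  have hFsq : Summable fun j => F j * F j :=
    St14.summable_self_mul_of_summable_rpow hp1 hp2 hF0 hFp
  -- Gronwall
  obtain ⟨K, hK0, hKb⟩ := St14.gronwall hc0 hD0 hF0 hg0 hFsq hrec
  -- conclude
  have hshift : Summable fun j => g (j+1) ^ p := by
    refine St14.summable_rpow_mono hq0 (fun j => hg0 _) (fun j => hKb j) ?_
    exact St14.summable_rpow_const_mul hK0 (fun j => hF0 _)
      ((summable_nat_add_iff 1).mpr hFp)
  exact (summable_nat_add_iff 1).mp hshift
end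

section
/- For the specific coefficients with n = 2, A_{j,j} = O and A_{j,j+1} = A_{j+1,j} = (j+1)·E (j ≥ 0), the matrix polynomials at z = 0 are given explicitly for all m ≥ 0 by: Q_{2m+1}(0) = O, Q_{2m}(0) = (−1)^m · (∏_{k=1}^{m} (2k−1)/(2k)) · E, P_{2m}(0) = O, and P_{2m+1}(0) = (−1)^m · (∏_{k=1}^{m} (2k)/(2k+1)) · E (empty products equal 1). -/
open Matrix Filter
open scoped BigOperators ENNReal

lemma sol_step (Y : ℕ → Mat 2)
    (h : SolEq1 (fun _ => 0) (fun j => ((j : ℂ) + 1) • 1) (fun j => ((j : ℂ) + 1) • 1)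
      (0 : ℂ) Y) (j : ℕ) :
    Y (j + 3) = (-(((j : ℂ) + 1) / ((j : ℂ) + 2))) • Y (j + 1) := by
  have H := h (j + 1)
  simp only [Alo, smul_mul_assoc, one_mul, zero_mul, zero_smul, add_zero, zero_add,
    Nat.cast_add, Nat.cast_one] at H
  have h2 : ((j : ℂ) + 2) ≠ 0 := by
    have : ((j : ℂ) + 2) = ((j + 2 : ℕ) : ℂ) := by push_cast; ring
    rw [this]
    exact Nat.cast_ne_zero.mpr (by omega)
  have key : ((j : ℂ) + 1 + 1) • Y (j + 1 + 2) = -(((j : ℂ) + 1) • Y (j + 1)) := by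
    linear_combination (norm := module) H
  have := congrArg (fun M => (((j : ℂ) + 2)⁻¹) • M) key
  simp only [smul_neg, smul_smul] at this
  have h22 : ((j : ℂ) + 1 + 1) = (j : ℂ) + 2 := by ring
  rw [h22, inv_mul_cancel₀ h2, one_smul] at this
  rw [show j + 3 = j + 1 + 2 from rfl, this, div_eq_inv_mul, neg_smul]

/-- explicit formulas for `P_j(0)` and `Q_j(0)` for the coefficients
`A_{j,j} = O`, `A_{j,j+1} = A_{j+1,j} = (j+1)E` with `n = 2`. -/
theorem statement15
    (P Q : ℕ → Mat 2)
    (hP : SolEq1 (fun _ => 0) (fun j => ((j : ℂ) + 1) • 1) (fun j => ((j : ℂ) + 1) • 1)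
      (0 : ℂ) P)
    (hQ : SolEq1 (fun _ => 0) (fun j => ((j : ℂ) + 1) • 1) (fun j => ((j : ℂ) + 1) • 1)
      (0 : ℂ) Q)
    (hP0 : P 0 = 1) (hP1 : P 1 = 0) (hQ0 : Q 0 = 0) (hQ1 : Q 1 = 1) :
    ∀ m : ℕ,
      Q (2 * m + 2) = 0 ∧
      Q (2 * m + 1) =
        ((-1 : ℂ) ^ m * ∏ k ∈ Finset.range m, (2 * (k : ℂ) + 1) / (2 * (k : ℂ) + 2)) •
          (1 : Mat 2) ∧
      P (2 * m + 1) = 0 ∧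
      P (2 * m + 2) =
        ((-1 : ℂ) ^ m * ∏ k ∈ Finset.range m, (2 * (k : ℂ) + 2) / (2 * (k : ℂ) + 3)) •
          (1 : Mat 2) := by
  intro m
  induction m with
  | zero =>
    have hQ2 : Q 2 = Q 0 := by
      have H := hQ 0
      simp only [Alo, Nat.cast_zero, zero_add, one_smul, zero_mul, add_zero,
        neg_one_mul, one_mul, zero_smul, smul_mul_assoc] at H
      linear_combination (norm := module) H
    have hP2 : P 2 = P 0 := by
      have H := hP 0
      simp only [Alo, Nat.cast_zero, zero_add, one_smul, zero_mul, add_zero,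
        neg_one_mul, one_mul, zero_smul, smul_mul_assoc] at H
      linear_combination (norm := module) H
    refine ⟨by simp [hQ2, hQ0], by simp [hQ1], by simp [hP1], by simp [hP2, hP0]⟩
  | succ m ih =>
    obtain ⟨ihQ2, ihQ1, ihP1, ihP2⟩ := ih
    have eQ1 := sol_step Q hQ (2 * m)
    have eQ2 := sol_step Q hQ (2 * m + 1)
    have eP1 := sol_step P hP (2 * m)
    have eP2 := sol_step P hP (2 * m + 1)
    push_cast at eQ1 eQ2 eP1 eP2
    refine ⟨?_, ?_, ?_, ?_⟩
    · rw [show 2 * (m + 1) + 2 = (2 * m + 1) + 3 from by ring, eQ2,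
        show (2 * m + 1) + 1 = 2 * m + 2 from rfl, ihQ2, smul_zero]
    · rw [show 2 * (m + 1) + 1 = 2 * m + 3 from by ring, eQ1,
        show 2 * m + 1 = 2 * m + 1 from rfl, ihQ1, smul_smul,
        Finset.prod_range_succ]
      congr 1
      ring
    · rw [show 2 * (m + 1) + 1 = 2 * m + 3 from by ring, eP1,
        show 2 * m + 1 = 2 * m + 1 from rfl, ihP1, smul_zero]
    · rw [show 2 * (m + 1) + 2 = (2 * m + 1) + 3 from by ring, eP2,
        show (2 * m + 1) + 1 = 2 * m + 2 from rfl, ihP2, smul_smul,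
        Finset.prod_range_succ]
      congr 1
      ring
end

section
/- For the specific coefficients with n = 2, A_{j,j} = O and A_{j,j+1} = A_{j+1,j} = (j+1)·E (j ≥ 0), every solution of the vector equation (1v) at z = 0 belongs to l^p_2 for every p > 2. -/
open Matrix Filter
open scoped BigOperators ENNReal

/-- for the coefficients `A_{j,j} = O`, `A_{j,j+1} = A_{j+1,j} = (j+1)E`
with `n = 2`, every solution of (1v) at `z = 0` is in `l^p_2` for every `p > 2`. -/
theorem statement16 :
    ∀ p : ℝ, 2 < p →
      ∀ u : ℕ → Fin 2 → ℂ,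
        SolEq1v (fun _ => 0) (fun j => ((j : ℂ) + 1) • 1) (fun j => ((j : ℂ) + 1) • 1)
          (0 : ℂ) u →
        Summable (fun j : ℕ => ‖u j‖ ^ p) := by
  intro p hp u h
  -- the two-step norm recurrence
  have key : ∀ j : ℕ, ((j : ℝ) + 2) * ‖u (j + 3)‖ = ((j : ℝ) + 1) * ‖u (j + 1)‖ := by
    intro j
    have hj := h (j + 1)
    have hv : (((j:ℕ):ℂ) + 1) • u (j + 1) + (((j+1:ℕ):ℂ) + 1) • u (j + 3) = 0 := by
      simpa [Alo, Matrix.smul_mulVec, Matrix.one_mulVec, Matrix.zero_mulVec] using hj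
    push_cast at hv
    have hv2 : ((j:ℂ) + 1 + 1) • u (j + 3) = -(((j:ℂ) + 1) • u (j + 1)) :=
      eq_neg_of_add_eq_zero_right hv
    rw [show ((j:ℂ) + 1 + 1) = (j:ℂ) + 2 by ring] at hv2
    have hnorm := congrArg norm hv2
    rw [norm_neg, norm_smul, norm_smul] at hnorm
    have e1 : ‖(j:ℂ) + 2‖ = (j : ℝ) + 2 := by
      rw [show ((j:ℂ) + 2) = ((j + 2 : ℕ) : ℂ) by push_cast; ring, Complex.norm_natCast]
      push_cast; ring
    have e2 : ‖(j:ℂ) + 1‖ = (j : ℝ) + 1 := by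
      rw [show ((j:ℂ) + 1) = ((j + 1 : ℕ) : ℂ) by push_cast; ring, Complex.norm_natCast]
      push_cast; ring
    rw [e1, e2] at hnorm
    exact hnorm
  set B : ℝ := max (‖u 1‖ ^ 2 * 1) (‖u 2‖ ^ 2 * 2) with hB
  have hB0 : 0 ≤ B := le_trans (by positivity) (le_max_left _ _)
  have main : ∀ k : ℕ, ‖u (k + 1)‖ ^ 2 * ((k : ℝ) + 1) ≤ B ∧
      ‖u (k + 2)‖ ^ 2 * ((k : ℝ) + 2) ≤ B := by
    intro k
    induction k with
    | zero =>
      have l1 := le_max_left (‖u 1‖ ^ 2 * 1) (‖u 2‖ ^ 2 * 2)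
      have l2 := le_max_right (‖u 1‖ ^ 2 * 1) (‖u 2‖ ^ 2 * 2)
      rw [← hB] at l1 l2
      constructor
      · push_cast; linarith
      · push_cast; linarith
    | succ n ih =>
      constructor
      · have h2 := ih.2
        have e : ((n + 1 : ℕ) : ℝ) + 1 = (n : ℝ) + 2 := by push_cast; ring
        rw [e]; exact h2
      · have hk := key n
        have h1 : ‖u (n + 1)‖ ^ 2 * ((n : ℝ) + 1) ≤ B := ih.1
        have hk2 : (((n:ℝ) + 2) * ‖u (n + 3)‖) ^ 2 = (((n:ℝ) + 1) * ‖u (n + 1)‖) ^ 2 := by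
          rw [hk]
        have goal : ‖u (n + 3)‖ ^ 2 * ((n : ℝ) + 3) ≤ B := by
          nlinarith [hk2, h1, hB0, sq_nonneg (‖u (n + 1)‖), sq_nonneg (‖u (n + 3)‖),
            sq_nonneg ((n:ℝ) + 2)]
        have e : ((n + 1 : ℕ) : ℝ) + 2 = (n : ℝ) + 3 := by push_cast; ring
        rw [e]; exact goal
  -- decay bound
  have bound : ∀ k : ℕ, ‖u (k + 1)‖ ≤ Real.sqrt B * ((k : ℝ) + 1) ^ (-(1/2) : ℝ) := by
    intro k
    have h1 : ‖u (k + 1)‖ ^ 2 ≤ B / ((k : ℝ) + 1) := by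
      rw [le_div_iff₀ (by positivity)]
      exact (main k).1
    have h2 : ‖u (k + 1)‖ ≤ Real.sqrt (B / ((k : ℝ) + 1)) := by
      rw [show ‖u (k+1)‖ = Real.sqrt (‖u (k+1)‖ ^ 2) by rw [Real.sqrt_sq (norm_nonneg _)]]
      exact Real.sqrt_le_sqrt h1
    calc ‖u (k + 1)‖ ≤ Real.sqrt (B / ((k : ℝ) + 1)) := h2
      _ = Real.sqrt B * ((k : ℝ) + 1) ^ (-(1/2) : ℝ) := by
          rw [Real.sqrt_div hB0, div_eq_mul_inv, Real.rpow_neg (by positivity),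
            Real.sqrt_eq_rpow, Real.sqrt_eq_rpow]
  -- summability
  have hcomp : ∀ k : ℕ, ‖u (k + 1)‖ ^ p ≤
      (Real.sqrt B) ^ p * ((k : ℝ) + 1) ^ (-(p/2) : ℝ) := by
    intro k
    have hpos : (0:ℝ) < (k : ℝ) + 1 := by positivity
    calc ‖u (k + 1)‖ ^ p
        ≤ (Real.sqrt B * ((k : ℝ) + 1) ^ (-(1/2) : ℝ)) ^ p :=
          Real.rpow_le_rpow (norm_nonneg _) (bound k) (by linarith)
      _ = (Real.sqrt B) ^ p * ((k : ℝ) + 1) ^ (-(p/2) : ℝ) := by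
          rw [Real.mul_rpow (Real.sqrt_nonneg _) (Real.rpow_nonneg hpos.le _),
            ← Real.rpow_mul hpos.le]
          congr 1
          ring
  have hsum : Summable (fun k : ℕ => ((k : ℝ)) ^ (-(p/2) : ℝ)) :=
    Real.summable_nat_rpow.2 (by linarith)
  have hsum1 : Summable (fun k : ℕ => ((k : ℝ) + 1) ^ (-(p/2) : ℝ)) := by
    have h' := (summable_nat_add_iff (f := fun k : ℕ => ((k : ℝ)) ^ (-(p/2) : ℝ)) 1).2 hsum
    refine h'.congr fun k => ?_
    push_cast
    ring_nf
  have hshift : Summable (fun k : ℕ => ‖u (k + 1)‖ ^ p) := by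
    refine Summable.of_nonneg_of_le (fun k => Real.rpow_nonneg (norm_nonneg _) p)
      hcomp (hsum1.mul_left _)
  exact (summable_nat_add_iff (f := fun j : ℕ => ‖u j‖ ^ p) 1).1 hshift
end
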